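/- arXiv:2605.17747 — 3 statements merged into one kernel-verified Lean document; each statement's English description precedes it below -/
import Mathlib

section
/- Let (L, ∘_λ, [·_λ ·]) be a transposed Poisson conformal superalgebra. Then for all homogeneous u, v, x, y ∈ L the following identity holds: (−1)^{|v||x|} x ∘_{μ−λ} [u_λ (v ∘_γ y)] + (−1)^{|u||v|} [(v ∘_γ x)_{γ+μ−λ} u] ∘_{γ+μ} y − (−1)^{|u||x|} (u ∘_λ v) ∘_{λ+γ} [x_{μ−λ} y] = 0. -/
open Polynomial
open scoped TensorProduct

noncomputable section

namespace TPCSAFormal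

/-- The super-sign `(-1)^{i·j}` for parities `i, j ∈ ℤ/2ℤ`. -/
def sgn (i j : ZMod 2) : ℂ := (-1 : ℂ) ^ (i.val * j.val)

variable (L : Type*) [AddCommGroup L] [Module ℂ L]
  [Module (Polynomial ℂ) L] [IsScalarTower ℂ (Polynomial ℂ) L]

/-- A conformal `λ`-product on the `ℂ[∂]`-module `L`, recorded by its family of `n`-th
product coefficients: `a ∘_λ b = ∑_n λ^n • coeff n a b`, with finitely many nonzero terms.
This is exactly the data of a `ℂ`-bilinear map `L ⊗ L → ℂ[λ] ⊗ L`. -/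
structure ConformalProduct where
  coeff : ℕ → L →ₗ[ℂ] L →ₗ[ℂ] L
  coeff_finite : ∀ a b : L, ∃ N : ℕ, ∀ n : ℕ, N ≤ n → coeff n a b = 0

variable {L}

/-- The value `a ∘_λ b` of the `λ`-product at `λ ∈ ℂ`.  Since `ℂ` is infinite, identities
between such values for all `λ` are equivalent to the corresponding polynomial identities. -/
def ConformalProduct.mul (m : ConformalProduct L) (lam : ℂ) (a b : L) : L :=
  ∑ᶠ n : ℕ, lam ^ n • m.coeff n a b

/-- The value `a ∘_{-∂-λ} b`, where `∂` acts on `L` as scalar multiplication by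
`X ∈ ℂ[∂]` (the variable `λ` being replaced by the operator `-∂-λ`). -/
def ConformalProduct.cmul (m : ConformalProduct L) (lam : ℂ) (a b : L) : L :=
  ∑ᶠ n : ℕ, ((-((X : Polynomial ℂ) + C lam)) ^ n) • m.coeff n a b

variable (L) in
/-- A `ℤ₂`-grading on `L` making it a `ℤ₂`-graded `ℂ[∂]`-module: `L = L₀ ⊕ L₁` with
`∂ L_i ⊆ L_i`, where `∂` acts as multiplication by `X ∈ ℂ[∂]`. -/
structure SuperModule where
  grade : ZMod 2 → Submodule ℂ L
  isInternal : DirectSum.IsInternal grade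
  X_smul_mem : ∀ (i : ZMod 2) (a : L), a ∈ grade i → (X : Polynomial ℂ) • a ∈ grade i

/-- `m` is an even `λ`-product on the `ℤ₂`-graded `ℂ[∂]`-module `(L, S)`:
it is even with respect to the grading and conformally sesquilinear. -/
structure IsLambdaProduct (S : SuperModule L) (m : ConformalProduct L) : Prop where
  even : ∀ (i j : ZMod 2) (a b : L), a ∈ S.grade i → b ∈ S.grade j →
    ∀ n : ℕ, m.coeff n a b ∈ S.grade (i + j)
  sesq_left : ∀ (lam : ℂ) (a b : L),
    m.mul lam ((X : Polynomial ℂ) • a) b = (-lam) • m.mul lam a b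
  sesq_right : ∀ (lam : ℂ) (a b : L),
    m.mul lam a ((X : Polynomial ℂ) • b) =
      (X : Polynomial ℂ) • m.mul lam a b + lam • m.mul lam a b

/-- `(L, S, m)` is a commutative associative conformal superalgebra. -/
structure IsCommAssoc (S : SuperModule L) (m : ConformalProduct L)
    extends IsLambdaProduct S m : Prop where
  comm : ∀ (i j : ZMod 2) (a b : L), a ∈ S.grade i → b ∈ S.grade j →
    ∀ lam : ℂ, m.mul lam a b = sgn i j • m.cmul lam b a
  assoc : ∀ (lam mu : ℂ) (a b c : L),
    m.mul lam a (m.mul mu b c) = m.mul (lam + mu) (m.mul lam a b) c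

/-- `(L, S, br)` is a Lie conformal superalgebra. -/
structure IsLie (S : SuperModule L) (br : ConformalProduct L)
    extends IsLambdaProduct S br : Prop where
  skew : ∀ (i j : ZMod 2) (a b : L), a ∈ S.grade i → b ∈ S.grade j →
    ∀ lam : ℂ, br.mul lam a b = -(sgn i j • br.cmul lam b a)
  jacobi : ∀ (i j : ZMod 2) (a b : L), a ∈ S.grade i → b ∈ S.grade j →
    ∀ (c : L) (lam mu : ℂ),
      br.mul lam a (br.mul mu b c) =
        br.mul (lam + mu) (br.mul lam a b) c + sgn i j • br.mul mu b (br.mul lam a c)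

/-- `(L, S, m, br)` is a transposed Poisson conformal superalgebra. -/
structure IsTPCSA (S : SuperModule L) (m br : ConformalProduct L) : Prop where
  commAssoc : IsCommAssoc S m
  lie : IsLie S br
  transposedLeibniz : ∀ (i j : ZMod 2) (a b : L), a ∈ S.grade i → b ∈ S.grade j →
    ∀ (c : L) (lam mu : ℂ),
      (2 : ℂ) • m.mul lam a (br.mul mu b c) =
        br.mul (lam + mu) (m.mul lam a b) c + sgn i j • br.mul mu b (m.mul lam a c)

/-- `(L, S, m, br)` is a Poisson conformal superalgebra. -/
structure IsPCSA (S : SuperModule L) (m br : ConformalProduct L) : Prop where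
  commAssoc : IsCommAssoc S m
  lie : IsLie S br
  leibniz : ∀ (i j : ZMod 2) (a b : L), a ∈ S.grade i → b ∈ S.grade j →
    ∀ (c : L) (lam mu : ℂ),
      br.mul lam a (m.mul mu b c) =
        m.mul (lam + mu) (br.mul lam a b) c + sgn i j • m.mul mu b (br.mul lam a c)

/-- `(L, S, br, α)` is a Hom-Lie conformal superalgebra. -/
structure IsHomLie (S : SuperModule L) (br : ConformalProduct L) (α : L → L)
    extends IsLambdaProduct S br : Prop where
  map_smul_add : ∀ (c : ℂ) (a b : L), α (c • a + b) = c • α a + α b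
  map_grade : ∀ (i : ZMod 2) (a : L), a ∈ S.grade i → α a ∈ S.grade i
  commute_partial : ∀ a : L, α ((X : Polynomial ℂ) • a) = (X : Polynomial ℂ) • α a
  skew : ∀ (i j : ZMod 2) (a b : L), a ∈ S.grade i → b ∈ S.grade j →
    ∀ lam : ℂ, br.mul lam a b = -(sgn i j • br.cmul lam b a)
  homJacobi : ∀ (i j : ZMod 2) (a b : L), a ∈ S.grade i → b ∈ S.grade j →
    ∀ (c : L) (lam mu : ℂ),
      br.mul lam (α a) (br.mul mu b c) =
        br.mul (lam + mu) (br.mul lam a b) (α c) + sgn i j • br.mul mu (α b) (br.mul lam a c)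

/-- `(L, S, p)` is a left-symmetric conformal superalgebra. -/
structure IsLeftSymmetric (S : SuperModule L) (p : ConformalProduct L)
    extends IsLambdaProduct S p : Prop where
  leftSym : ∀ (i j : ZMod 2) (a b : L), a ∈ S.grade i → b ∈ S.grade j →
    ∀ (c : L) (lam mu : ℂ),
      p.mul (lam + mu) (p.mul lam a b) c - p.mul lam a (p.mul mu b c) =
        sgn i j • (p.mul (lam + mu) (p.mul mu b a) c - p.mul mu b (p.mul lam a c))

/-- `(L, S, p)` is a (left) Novikov conformal superalgebra. -/
structure IsNovikov (S : SuperModule L) (p : ConformalProduct L)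
    extends IsLeftSymmetric S p : Prop where
  novikov : ∀ (j k : ZMod 2) (b c : L), b ∈ S.grade j → c ∈ S.grade k →
    ∀ (a : L) (lam mu : ℂ),
      p.mul (lam + mu) (p.mul lam a b) c = sgn j k • p.cmul mu (p.mul lam a c) b

/-- `(L, S, mc, p)` is a Novikov-Poisson conformal superalgebra. -/
structure IsNovikovPoisson (S : SuperModule L) (mc p : ConformalProduct L) : Prop where
  commAssoc : IsCommAssoc S mc
  novikov : IsNovikov S p
  compat₁ : ∀ (lam mu : ℂ) (a b c : L),
    p.mul (lam + mu) (mc.mul lam a b) c = mc.mul lam a (p.mul mu b c)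
  compat₂ : ∀ (i j : ZMod 2) (a b : L), a ∈ S.grade i → b ∈ S.grade j →
    ∀ (c : L) (lam mu : ℂ),
      mc.mul (lam + mu) (p.mul lam a b) c - p.mul lam a (mc.mul mu b c) =
        sgn i j • (mc.mul (lam + mu) (p.mul mu b a) c - p.mul mu b (mc.mul lam a c))

/-- `(L, S, mc, p)` is a pre-Lie commutative conformal superalgebra. -/
structure IsPreLieComm (S : SuperModule L) (mc p : ConformalProduct L) : Prop where
  commAssoc : IsCommAssoc S mc
  leftSymmetric : IsLeftSymmetric S p
  compat : ∀ (i j : ZMod 2) (a b : L), a ∈ S.grade i → b ∈ S.grade j →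
    ∀ (c : L) (lam mu : ℂ),
      p.mul lam a (mc.mul mu b c) =
        mc.mul (lam + mu) (p.mul lam a b) c + sgn i j • mc.mul mu b (p.mul lam a c)

/-- `(L, S, mc, p)` is a pre-Lie Poisson conformal superalgebra. -/
structure IsPreLiePoisson (S : SuperModule L) (mc p : ConformalProduct L) : Prop where
  commAssoc : IsCommAssoc S mc
  leftSymmetric : IsLeftSymmetric S p
  compat₁ : ∀ (lam mu : ℂ) (a b c : L),
    p.mul (lam + mu) (mc.mul lam a b) c = mc.mul lam a (p.mul mu b c)
  compat₂ : ∀ (i j : ZMod 2) (a b : L), a ∈ S.grade i → b ∈ S.grade j →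
    ∀ (c : L) (lam mu : ℂ),
      mc.mul (lam + mu) (p.mul lam a b) c - p.mul lam a (mc.mul mu b c) =
        sgn i j • (mc.mul (lam + mu) (p.mul mu b a) c - p.mul mu b (mc.mul lam a c))


/-! ### Auxiliary infrastructure -/

section Infra

variable {L : Type*} [AddCommGroup L] [Module ℂ L]
  [Module (Polynomial ℂ) L] [IsScalarTower ℂ (Polynomial ℂ) L]

/-- The `λ`-product evaluated at an arbitrary polynomial point. -/
noncomputable def ConformalProduct.pmul (m : ConformalProduct L) (q : Polynomial ℂ) (a b : L) :
    L := ∑ᶠ n : ℕ, q ^ n • m.coeff n a b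

lemma smulC_eq (c : ℂ) (z : L) : (C c : Polynomial ℂ) • z = c • z := by
  rw [← Polynomial.algebraMap_eq, algebraMap_smul]

lemma smul_comm_poly (c : ℂ) (q : Polynomial ℂ) (z : L) : q • c • z = c • q • z := by
  rw [← smulC_eq c z, ← mul_smul, mul_comm, mul_smul, smulC_eq]

namespace ConformalProduct

variable (m : ConformalProduct L)

lemma pmul_eq_sum {a b : L} {N : ℕ} (h : ∀ n, N ≤ n → m.coeff n a b = 0) (q : Polynomial ℂ) :
    m.pmul q a b = ∑ n ∈ Finset.range N, q ^ n • m.coeff n a b := by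
  apply finsum_eq_sum_of_support_subset
  intro n hn
  simp only [Function.mem_support, ne_eq] at hn
  simp only [Finset.coe_range, Set.mem_Iio]
  by_contra hc
  exact hn (by rw [h n (by omega)]; simp)

lemma exists_bound (a b : L) : ∃ N, ∀ n, N ≤ n → m.coeff n a b = 0 := m.coeff_finite a b

lemma mul_eq_pmul (lam : ℂ) (a b : L) : m.mul lam a b = m.pmul (C lam) a b := by
  unfold ConformalProduct.mul ConformalProduct.pmul
  apply finsum_congr
  intro n
  rw [← C_pow, smulC_eq]

lemma cmul_eq_pmul (lam : ℂ) (a b : L) :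
    m.cmul lam a b = m.pmul (-(X + C lam)) a b := rfl

lemma pmul_add_left (q : Polynomial ℂ) (a a' b : L) :
    m.pmul q (a + a') b = m.pmul q a b + m.pmul q a' b := by
  obtain ⟨N1, h1⟩ := m.exists_bound a b
  obtain ⟨N2, h2⟩ := m.exists_bound a' b
  have h3 : ∀ n, max N1 N2 ≤ n → m.coeff n (a + a') b = 0 := by
    intro n hn
    simp [h1 n (le_trans (le_max_left _ _) hn), h2 n (le_trans (le_max_right _ _) hn)]
  rw [m.pmul_eq_sum h3, m.pmul_eq_sum (fun n hn => h1 n (le_trans (le_max_left _ _) hn)) q,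
    m.pmul_eq_sum (fun n hn => h2 n (le_trans (le_max_right _ _) hn)) q, ← Finset.sum_add_distrib]
  apply Finset.sum_congr rfl
  intro n _
  simp [smul_add]

lemma pmul_add_right (q : Polynomial ℂ) (a b b' : L) :
    m.pmul q a (b + b') = m.pmul q a b + m.pmul q a b' := by
  obtain ⟨N1, h1⟩ := m.exists_bound a b
  obtain ⟨N2, h2⟩ := m.exists_bound a b'
  have h3 : ∀ n, max N1 N2 ≤ n → m.coeff n a (b + b') = 0 := by
    intro n hn
    simp [h1 n (le_trans (le_max_left _ _) hn), h2 n (le_trans (le_max_right _ _) hn)]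
  rw [m.pmul_eq_sum h3, m.pmul_eq_sum (fun n hn => h1 n (le_trans (le_max_left _ _) hn)) q,
    m.pmul_eq_sum (fun n hn => h2 n (le_trans (le_max_right _ _) hn)) q, ← Finset.sum_add_distrib]
  apply Finset.sum_congr rfl
  intro n _
  simp [smul_add]

lemma pmul_smul_left (q : Polynomial ℂ) (c : ℂ) (a b : L) :
    m.pmul q (c • a) b = c • m.pmul q a b := by
  obtain ⟨N, h⟩ := m.exists_bound a b
  have h' : ∀ n, N ≤ n → m.coeff n (c • a) b = 0 := by
    intro n hn; simp [h n hn]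
  rw [m.pmul_eq_sum h', m.pmul_eq_sum h, Finset.smul_sum]
  apply Finset.sum_congr rfl
  intro n _
  simp [smul_comm_poly]

lemma pmul_smul_right (q : Polynomial ℂ) (c : ℂ) (a b : L) :
    m.pmul q a (c • b) = c • m.pmul q a b := by
  obtain ⟨N, h⟩ := m.exists_bound a b
  have h' : ∀ n, N ≤ n → m.coeff n a (c • b) = 0 := by
    intro n hn; simp [h n hn]
  rw [m.pmul_eq_sum h', m.pmul_eq_sum h, Finset.smul_sum]
  apply Finset.sum_congr rfl
  intro n _
  simp [smul_comm_poly]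

lemma pmul_zero_left (q : Polynomial ℂ) (b : L) : m.pmul q 0 b = 0 := by
  have h : ∀ n, 0 ≤ n → m.coeff n (0 : L) b = 0 := by intro n _; simp
  rw [m.pmul_eq_sum h]; simp

lemma pmul_zero_right (q : Polynomial ℂ) (a : L) : m.pmul q a 0 = 0 := by
  have h : ∀ n, 0 ≤ n → m.coeff n a (0 : L) = 0 := by intro n _; simp
  rw [m.pmul_eq_sum h]; simp

lemma pmul_sum_left (q : Polynomial ℂ) {ι : Type*} (s : Finset ι) (f : ι → L) (b : L) :
    m.pmul q (∑ i ∈ s, f i) b = ∑ i ∈ s, m.pmul q (f i) b := by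
  classical
  induction s using Finset.induction_on with
  | empty => simp [m.pmul_zero_left]
  | insert a' s' hx ih =>
                    rw [Finset.sum_insert hx, m.pmul_add_left, ih, Finset.sum_insert hx]

lemma pmul_sum_right (q : Polynomial ℂ) {ι : Type*} (s : Finset ι) (a : L) (f : ι → L) :
    m.pmul q a (∑ i ∈ s, f i) = ∑ i ∈ s, m.pmul q a (f i) := by
  classical
  induction s using Finset.induction_on with
  | empty => simp [m.pmul_zero_right]
  | insert a' s' hx ih =>
                    rw [Finset.sum_insert hx, m.pmul_add_right, ih, Finset.sum_insert hx]

end ConformalProduct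

end Infra

section Infra2
set_option linter.unusedSectionVars false

variable {L : Type*} [AddCommGroup L] [Module ℂ L]
  [Module (Polynomial ℂ) L] [IsScalarTower ℂ (Polynomial ℂ) L]

lemma sum_pad (u : ℕ → L) {N M : ℕ} (h : N ≤ M) (q : Polynomial ℂ) :
    ∑ n ∈ Finset.range N, q ^ n • u n
      = ∑ n ∈ Finset.range M, q ^ n • (if n < N then u n else 0) := by
  calc ∑ n ∈ Finset.range N, q ^ n • u n
      = ∑ n ∈ Finset.range N, q ^ n • (if n < N then u n else 0) := by
        apply Finset.sum_congr rfl
        intro n hn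
        rw [if_pos (Finset.mem_range.mp hn)]
    _ = ∑ n ∈ Finset.range M, q ^ n • (if n < N then u n else 0) := by
        apply Finset.sum_subset (Finset.range_subset_range.mpr h)
        intro n _ hn
        have hc : ¬ n < N := fun hc => hn (Finset.mem_range.mpr hc)
        rw [if_neg hc, smul_zero]

lemma sum_C_pow_smul (lam : ℂ) (N : ℕ) (u : ℕ → L) :
    ∑ n ∈ Finset.range N, (C lam : Polynomial ℂ) ^ n • u n
      = ∑ n ∈ Finset.range N, lam ^ n • u n := by
  apply Finset.sum_congr rfl
  intro n _
  rw [← C_pow, smulC_eq]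

/-- Extraction: an `L`-valued polynomial function vanishing at every complex point has
vanishing coefficients. -/
lemma extraction {N : ℕ} (f : ℕ → L)
    (h : ∀ lam : ℂ, ∑ n ∈ Finset.range N, lam ^ n • f n = 0) :
    ∀ n ∈ Finset.range N, f n = 0 := by
  intro n hn
  rw [← Module.forall_dual_apply_eq_zero_iff ℂ]
  intro φ
  have hpe : ∀ lam : ℂ,
      (∑ k ∈ Finset.range N, C (φ (f k)) * X ^ k : Polynomial ℂ).eval lam = 0 := by
    intro lam
    have h2 := congrArg φ (h lam)
    rw [map_sum] at h2
    simp only [map_smul, smul_eq_mul, map_zero] at h2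
    rw [eval_finset_sum]
    simp only [eval_mul, eval_C, eval_pow, eval_X]
    rw [← h2]
    exact Finset.sum_congr rfl (fun k _ => mul_comm _ _)
  have hp0 : (∑ k ∈ Finset.range N, C (φ (f k)) * X ^ k : Polynomial ℂ) = 0 :=
    Polynomial.funext (by simp [hpe])
  have hco := congrArg (fun r => Polynomial.coeff r n) hp0
  simp only [Polynomial.finset_sum_coeff, Polynomial.coeff_C_mul, Polynomial.coeff_X_pow,
    Polynomial.coeff_zero] at hco
  rw [Finset.sum_eq_single_of_mem n hn
    (fun b _ hb => by rw [if_neg (fun hc => hb hc.symm), mul_zero])] at hco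
  simpa using hco

/-- Polynomial maps `ℂ[X] → L`. -/
def IsPM (Φ : Polynomial ℂ → L) : Prop :=
  ∃ N : ℕ, ∃ u : ℕ → L, ∀ q : Polynomial ℂ, Φ q = ∑ n ∈ Finset.range N, q ^ n • u n

/-- Polynomial maps agreeing on constants agree everywhere. -/
lemma liftEq {Φ Ψ : Polynomial ℂ → L} (hΦ : IsPM Φ) (hΨ : IsPM Ψ)
    (h : ∀ lam : ℂ, Φ (C lam) = Ψ (C lam)) : ∀ q, Φ q = Ψ q := by
  obtain ⟨N0, u0, hu0⟩ := hΦ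
  obtain ⟨N1, u1, hu1⟩ := hΨ
  set N := max N0 N1 with hN
  set u0' : ℕ → L := fun n => if n < N0 then u0 n else 0 with hu0'
  set u1' : ℕ → L := fun n => if n < N1 then u1 n else 0 with hu1'
  have e0 : ∀ q : Polynomial ℂ, Φ q = ∑ n ∈ Finset.range N, q ^ n • u0' n := by
    intro q; rw [hu0 q, sum_pad u0 (le_max_left _ _) q]
  have e1 : ∀ q : Polynomial ℂ, Ψ q = ∑ n ∈ Finset.range N, q ^ n • u1' n := by
    intro q; rw [hu1 q, sum_pad u1 (le_max_right _ _) q]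
  have key : ∀ n ∈ Finset.range N, u0' n - u1' n = 0 := by
    apply extraction
    intro lam
    have h1 := (e0 (C lam)).symm.trans ((h lam).trans (e1 (C lam)))
    rw [sum_C_pow_smul, sum_C_pow_smul] at h1
    simp only [smul_sub, Finset.sum_sub_distrib, h1, sub_self]
  intro q
  rw [e0 q, e1 q]
  apply Finset.sum_congr rfl
  intro n hn
  rw [sub_eq_zero.mp (key n hn)]

namespace ConformalProduct
variable (m : ConformalProduct L)

lemma isPM_pmul (a b : L) : IsPM (fun q => m.pmul q a b) := by
  obtain ⟨N, h⟩ := m.exists_bound a b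
  exact ⟨N, fun n => m.coeff n a b, fun q => m.pmul_eq_sum h q⟩

end ConformalProduct

lemma IsPM.add {Φ Ψ : Polynomial ℂ → L} (hΦ : IsPM Φ) (hΨ : IsPM Ψ) :
    IsPM (fun q => Φ q + Ψ q) := by
  obtain ⟨N0, u0, hu0⟩ := hΦ
  obtain ⟨N1, u1, hu1⟩ := hΨ
  refine ⟨max N0 N1, fun n => (if n < N0 then u0 n else 0) + (if n < N1 then u1 n else 0),
    fun q => ?_⟩
  show Φ q + Ψ q = _
  rw [hu0 q, hu1 q, sum_pad u0 (le_max_left _ _) q, sum_pad u1 (le_max_right _ _) q,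
    ← Finset.sum_add_distrib]
  exact Finset.sum_congr rfl (fun n _ => by rw [smul_add])

lemma IsPM.smulC {Φ : Polynomial ℂ → L} (hΦ : IsPM Φ) (c : ℂ) :
    IsPM (fun q => c • Φ q) := by
  obtain ⟨N, u, hu⟩ := hΦ
  exact ⟨N, fun n => c • u n, fun q => by
    show c • Φ q = _
    rw [hu q, Finset.smul_sum]
    exact Finset.sum_congr rfl (fun n _ => (smul_comm_poly c (q^n) (u n)).symm)⟩

lemma IsPM.smulPolyConst {Φ : Polynomial ℂ → L} (hΦ : IsPM Φ) (p : Polynomial ℂ) :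
    IsPM (fun q => p • Φ q) := by
  obtain ⟨N, u, hu⟩ := hΦ
  exact ⟨N, fun n => p • u n, fun q => by
    show p • Φ q = _
    rw [hu q, Finset.smul_sum]
    exact Finset.sum_congr rfl (fun n _ => by rw [smul_smul, smul_smul, mul_comm])⟩

lemma IsPM.mulQ {Φ : Polynomial ℂ → L} (hΦ : IsPM Φ) :
    IsPM (fun q => q • Φ q) := by
  obtain ⟨N, u, hu⟩ := hΦ
  refine ⟨N + 1, fun n => if n = 0 then 0 else u (n - 1), fun q => ?_⟩
  show q • Φ q = _
  have h2 : ∑ n ∈ Finset.range (N+1), q ^ n • (if n = 0 then (0:L) else u (n - 1))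
      = ∑ k ∈ Finset.range N, q ^ (k+1) • (if k+1 = 0 then (0:L) else u (k+1-1))
        + q ^ 0 • (if (0:ℕ) = 0 then (0:L) else u (0-1)) :=
    Finset.sum_range_succ' _ N
  rw [hu q, Finset.smul_sum, h2]
  norm_num
  apply Finset.sum_congr rfl
  intro n _
  rw [smul_smul, ← pow_succ']

lemma IsPM.const (z : L) : IsPM (fun _ : Polynomial ℂ => z) :=
  ⟨1, fun _ => z, fun q => by simp⟩

lemma IsPM.zero : IsPM (fun _ : Polynomial ℂ => (0 : L)) :=
  ⟨0, fun _ => 0, fun q => by simp⟩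

lemma IsPM.finsetSum {ι : Type*} (s : Finset ι) (F : ι → Polynomial ℂ → L)
    (h : ∀ i ∈ s, IsPM (F i)) : IsPM (fun q => ∑ i ∈ s, F i q) := by
  classical
  induction s using Finset.induction_on with
  | empty => simpa using IsPM.zero
  | insert a s' hx ih =>
      simp only [Finset.sum_insert hx]
      exact (h a (Finset.mem_insert_self a s')).add
        (ih (fun i hi => h i (Finset.mem_insert_of_mem hi)))

end Infra2

section Infra3
set_option linter.unusedSectionVars false

variable {L : Type*} [AddCommGroup L] [Module ℂ L]
  [Module (Polynomial ℂ) L] [IsScalarTower ℂ (Polynomial ℂ) L]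

lemma IsPM.congr {Φ Ψ : Polynomial ℂ → L} (hΦ : IsPM Φ) (h : ∀ q, Φ q = Ψ q) : IsPM Ψ := by
  obtain ⟨N, u, hu⟩ := hΦ
  exact ⟨N, u, fun q => (h q).symm.trans (hu q)⟩

namespace ConformalProduct
variable {m : ConformalProduct L} {S : SuperModule L}

/-- Lifted left sesquilinearity. -/
lemma pmul_X_left (hm : IsLambdaProduct S m) (a b : L) (q : Polynomial ℂ) :
    m.pmul q ((X : Polynomial ℂ) • a) b = (-q) • m.pmul q a b := by
  have h := liftEq (Φ := fun q => m.pmul q ((X : Polynomial ℂ) • a) b)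
    (Ψ := fun q => (-q) • m.pmul q a b)
    (m.isPM_pmul _ b)
    ((((m.isPM_pmul a b).mulQ).smulC (-1)).congr
      (fun q => by rw [neg_smul, one_smul, neg_smul]))
    (fun lam => by
      show m.pmul (C lam) ((X : Polynomial ℂ) • a) b = (-(C lam)) • m.pmul (C lam) a b
      have h0 := hm.sesq_left lam a b
      simp only [m.mul_eq_pmul] at h0
      rw [h0, ← smulC_eq (-lam), map_neg])
  exact h q

/-- Lifted right sesquilinearity. -/
lemma pmul_X_right (hm : IsLambdaProduct S m) (a b : L) (q : Polynomial ℂ) :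
    m.pmul q a ((X : Polynomial ℂ) • b) = (X + q) • m.pmul q a b := by
  have h := liftEq (Φ := fun q => m.pmul q a ((X : Polynomial ℂ) • b))
    (Ψ := fun q => (X + q) • m.pmul q a b)
    (m.isPM_pmul a _)
    ((((m.isPM_pmul a b).smulPolyConst X).add ((m.isPM_pmul a b).mulQ)).congr
      (fun q => by rw [← add_smul]))
    (fun lam => by
      show m.pmul (C lam) a ((X : Polynomial ℂ) • b) = (X + C lam) • m.pmul (C lam) a b
      have h0 := hm.sesq_right lam a b
      simp only [m.mul_eq_pmul] at h0
      rw [h0, add_smul, smulC_eq])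
  exact h q

/-- Pull a polynomial scalar out of the left slot. -/
lemma pmul_pull_left (hm : IsLambdaProduct S m) (p : Polynomial ℂ) (a b : L) (q : Polynomial ℂ) :
    m.pmul q (p • a) b = (Polynomial.aeval (-q) p) • m.pmul q a b := by
  induction p using Polynomial.induction_on' with
  | add f g hf hg => rw [add_smul, m.pmul_add_left, hf, hg, map_add, add_smul]
  | monomial n c =>
      have hx : ∀ k : ℕ, m.pmul q (((X : Polynomial ℂ) ^ k) • a) b
          = ((-q) ^ k) • m.pmul q a b := by
        intro k
        induction k with
        | zero => simp
        | succ k ih => rw [pow_succ', mul_smul, pmul_X_left hm, ih, smul_smul, ← pow_succ']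
      rw [← Polynomial.C_mul_X_pow_eq_monomial, mul_smul, smulC_eq, m.pmul_smul_left, hx n,
        map_mul, map_pow, Polynomial.aeval_X, Polynomial.aeval_C, mul_smul, algebraMap_smul]

/-- Pull a polynomial scalar out of the right slot. -/
lemma pmul_pull_right (hm : IsLambdaProduct S m) (p : Polynomial ℂ) (a b : L) (q : Polynomial ℂ) :
    m.pmul q a (p • b) = (Polynomial.aeval (X + q) p) • m.pmul q a b := by
  induction p using Polynomial.induction_on' with
  | add f g hf hg => rw [add_smul, m.pmul_add_right, hf, hg, map_add, add_smul]
  | monomial n c =>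
      have hx : ∀ k : ℕ, m.pmul q a (((X : Polynomial ℂ) ^ k) • b)
          = ((X + q) ^ k) • m.pmul q a b := by
        intro k
        induction k with
        | zero => simp
        | succ k ih => rw [pow_succ', mul_smul, pmul_X_right hm, ih, smul_smul, ← pow_succ']
      rw [← Polynomial.C_mul_X_pow_eq_monomial, mul_smul, smulC_eq, m.pmul_smul_right, hx n,
        map_mul, map_pow, Polynomial.aeval_X, Polynomial.aeval_C, mul_smul, algebraMap_smul]

/-- Repointing a composite in the left slot of a `pmul`. -/
lemma repoint_left (hm1 : IsLambdaProduct S m) {m2 : ConformalProduct L}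
    (q p p' : Polynomial ℂ) (h : Polynomial.aeval (-q) p = Polynomial.aeval (-q) p')
    (a b c : L) :
    m.pmul q (m2.pmul p a b) c = m.pmul q (m2.pmul p' a b) c := by
  obtain ⟨N, hN⟩ := m2.exists_bound a b
  rw [m2.pmul_eq_sum hN p, m2.pmul_eq_sum hN p', m.pmul_sum_left, m.pmul_sum_left]
  apply Finset.sum_congr rfl
  intro n _
  rw [pmul_pull_left hm1, pmul_pull_left hm1, map_pow, map_pow, h]

/-- Repointing a composite in the right slot of a `pmul`. -/
lemma repoint_right (hm1 : IsLambdaProduct S m) {m2 : ConformalProduct L}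
    (q p p' : Polynomial ℂ) (h : Polynomial.aeval (X + q) p = Polynomial.aeval (X + q) p')
    (a b c : L) :
    m.pmul q c (m2.pmul p a b) = m.pmul q c (m2.pmul p' a b) := by
  obtain ⟨N, hN⟩ := m2.exists_bound a b
  rw [m2.pmul_eq_sum hN p, m2.pmul_eq_sum hN p', m.pmul_sum_right, m.pmul_sum_right]
  apply Finset.sum_congr rfl
  intro n _
  rw [pmul_pull_right hm1, pmul_pull_right hm1, map_pow, map_pow, h]

end ConformalProduct

/-- Polynomial scalars preserve the grading. -/
lemma SuperModule.poly_smul_mem (S : SuperModule L) (i : ZMod 2) (p : Polynomial ℂ) (z : L)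
    (hz : z ∈ S.grade i) : p • z ∈ S.grade i := by
  induction p using Polynomial.induction_on' with
  | add f g hf hg => rw [add_smul]; exact (S.grade i).add_mem hf hg
  | monomial n c =>
      have hx : ∀ k : ℕ, ((X : Polynomial ℂ) ^ k) • z ∈ S.grade i := by
        intro k
        induction k with
        | zero => simpa using hz
        | succ k ih =>
            rw [pow_succ', mul_smul]
            exact S.X_smul_mem i _ ih
      rw [← Polynomial.C_mul_X_pow_eq_monomial, mul_smul, smulC_eq]
      exact (S.grade i).smul_mem c (hx n)

/-- `pmul` respects the grading. -/
lemma ConformalProduct.pmul_mem {m : ConformalProduct L} {S : SuperModule L}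
    (hm : IsLambdaProduct S m) {i j : ZMod 2} {a b : L}
    (ha : a ∈ S.grade i) (hb : b ∈ S.grade j) (q : Polynomial ℂ) :
    m.pmul q a b ∈ S.grade (i + j) := by
  obtain ⟨N, hN⟩ := m.exists_bound a b
  rw [m.pmul_eq_sum hN q]
  exact Submodule.sum_mem _ (fun n _ => S.poly_smul_mem _ _ _ (hm.even i j a b ha hb n))

/-! #### sign lemmas -/

lemma sgn_sq (i j : ZMod 2) : sgn i j * sgn i j = 1 := by
  unfold sgn
  rw [← pow_add]
  have he : Even (i.val * j.val + i.val * j.val) := ⟨i.val * j.val, rfl⟩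
  exact he.neg_one_pow

lemma sgn_comm (i j : ZMod 2) : sgn i j = sgn j i := by
  unfold sgn; rw [mul_comm]

lemma sgn_add_left (i j k : ZMod 2) : sgn (i + j) k = sgn i k * sgn j k := by
  unfold sgn
  rw [← pow_add]
  have h2 : ∀ i j k : ZMod 2, ((i+j).val * k.val) % 2 = (i.val * k.val + j.val * k.val) % 2 := by
    decide
  rw [neg_one_pow_eq_pow_mod_two, h2 i j k, ← neg_one_pow_eq_pow_mod_two]

lemma sgn_add_right (i j k : ZMod 2) : sgn i (j + k) = sgn i j * sgn i k := by
  rw [sgn_comm, sgn_add_left, sgn_comm j i, sgn_comm k i]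

end Infra3

section Infra4
set_option linter.unusedSectionVars false
set_option maxHeartbeats 1000000

variable {L : Type*} [AddCommGroup L] [Module ℂ L]
  [Module (Polynomial ℂ) L] [IsScalarTower ℂ (Polynomial ℂ) L]
  {S : SuperModule L} {m br : ConformalProduct L}

open ConformalProduct

lemma aeval_negXC (r : Polynomial ℂ) (s : ℂ) :
    Polynomial.aeval r (-(X + C s) : Polynomial ℂ) = -(r + C s) := by
  rw [map_neg, map_add, Polynomial.aeval_X, Polynomial.aeval_C, ← Polynomial.algebraMap_eq]

lemma aeval_CC (r : Polynomial ℂ) (s : ℂ) :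
    Polynomial.aeval r (C s : Polynomial ℂ) = C s := by
  rw [Polynomial.aeval_C, ← Polynomial.algebraMap_eq]

/-- Commutativity in pmul form. -/
lemma commP (hCA : IsCommAssoc S m) {i j : ZMod 2} {a b : L}
    (ha : a ∈ S.grade i) (hb : b ∈ S.grade j) (s : ℂ) :
    m.pmul (C s) a b = sgn i j • m.pmul (-(X + C s)) b a := by
  have h := hCA.comm i j a b ha hb s
  rwa [m.mul_eq_pmul, m.cmul_eq_pmul] at h

lemma commP' (hCA : IsCommAssoc S m) {i j : ZMod 2} {a b : L}
    (ha : a ∈ S.grade i) (hb : b ∈ S.grade j) (s : ℂ) :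
    m.pmul (-(X + C s)) b a = sgn i j • m.pmul (C s) a b := by
  rw [commP hCA ha hb s, smul_smul, sgn_sq, one_smul]

/-- Skew-symmetry in pmul form. -/
lemma skewP (hL : IsLie S br) {i j : ZMod 2} {a b : L}
    (ha : a ∈ S.grade i) (hb : b ∈ S.grade j) (s : ℂ) :
    br.pmul (C s) a b = -(sgn i j • br.pmul (-(X + C s)) b a) := by
  have h := hL.skew i j a b ha hb s
  rwa [br.mul_eq_pmul, br.cmul_eq_pmul] at h

lemma skewP' (hL : IsLie S br) {i j : ZMod 2} {a b : L}
    (ha : a ∈ S.grade i) (hb : b ∈ S.grade j) (s : ℂ) :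
    br.pmul (-(X + C s)) b a = -(sgn i j • br.pmul (C s) a b) := by
  rw [skewP hL ha hb s]
  rw [smul_neg, smul_smul, sgn_sq, one_smul, neg_neg]

/-- Associativity in pmul form (complex points). -/
lemma assocP (hCA : IsCommAssoc S m) (s t : ℂ) (a b c : L) :
    m.pmul (C s) a (m.pmul (C t) b c) = m.pmul (C (s + t)) (m.pmul (C s) a b) c := by
  have h := hCA.assoc s t a b c
  simp only [m.mul_eq_pmul] at h
  exact h

/-- Transposed Leibniz in pmul form (complex points). -/
lemma tlP (hT : IsTPCSA S m br) {i j : ZMod 2} {a b : L}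
    (ha : a ∈ S.grade i) (hb : b ∈ S.grade j) (c : L) (s t : ℂ) :
    (2:ℂ) • m.pmul (C s) a (br.pmul (C t) b c)
      = br.pmul (C (s + t)) (m.pmul (C s) a b) c
        + sgn i j • br.pmul (C t) b (m.pmul (C s) a c) := by
  have h := hT.transposedLeibniz i j a b ha hb c s t
  simp only [m.mul_eq_pmul, br.mul_eq_pmul] at h
  exact h

/-- The conjugated associativity rule (I). -/
lemma GA1 (hCA : IsCommAssoc S m) {i j k : ZMod 2} {a b c : L}
    (ha : a ∈ S.grade i) (hb : b ∈ S.grade j) (hc : c ∈ S.grade k) (t s : ℂ) :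
    m.pmul (-(X + C t)) a (m.pmul (C s) b c)
      = m.pmul (-(X + C (t - s))) (m.pmul (-(X + C s)) a b) c := by
  have hP := hCA.toIsLambdaProduct
  have hbc : m.pmul (C s) b c ∈ S.grade (j + k) := pmul_mem hP hb hc _
  have hba : m.pmul (C s) b a ∈ S.grade (j + i) := pmul_mem hP hb ha _
  have e1 : m.pmul (-(X + C t)) a (m.pmul (C s) b c)
      = sgn (j + k) i • m.pmul (C t) (m.pmul (C s) b c) a := commP' hCA hbc ha t
  have e4 : m.pmul (-(X + C s)) a b = sgn j i • m.pmul (C s) b a := commP' hCA hb ha s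
  have e6 : m.pmul (-(X + C (t-s))) (m.pmul (C s) b a) c
      = sgn k (j + i) • m.pmul (C (t-s)) c (m.pmul (C s) b a) := commP' hCA hc hba (t-s)
  have e7 : m.pmul (C (t-s)) c (m.pmul (C s) b a)
      = m.pmul (C (t-s+s)) (m.pmul (C (t-s)) c b) a := assocP hCA _ _ _ _ _
  have e8 : m.pmul (C (t-s)) c b = sgn k j • m.pmul (-(X + C (t-s))) b c :=
    commP hCA hc hb (t-s)
  have e9 : m.pmul (C (t-s+s)) (m.pmul (-(X + C (t-s))) b c) a
      = m.pmul (C (t-s+s)) (m.pmul (C s) b c) a := by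
    apply repoint_left hP
    rw [aeval_negXC, aeval_CC]
    have h1 : -(-(C (t-s+s) : Polynomial ℂ) + C (t-s)) = C (t-s+s) - C (t-s) := by ring
    rw [h1, ← Polynomial.C_sub]
    congr 1
    ring
  have e10 : (C (t-s+s) : Polynomial ℂ) = C t := by rw [show t - s + s = t by ring]
  have eR : m.pmul (-(X + C (t - s))) (m.pmul (-(X + C s)) a b) c
      = (sgn j i * sgn k (j+i) * sgn k j) • m.pmul (C t) (m.pmul (C s) b c) a := by
    rw [e4, m.pmul_smul_left, e6, e7, e8, m.pmul_smul_left, e9, e10, smul_smul, smul_smul]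
  rw [e1, eR]
  congr 1
  rw [sgn_add_left, sgn_add_right]
  linear_combination (-(sgn j i * sgn k i)) * sgn_sq k j

/-- The conjugated associativity rule (II). -/
lemma GA2 (hCA : IsCommAssoc S m) {i j k : ZMod 2} {a b c : L}
    (ha : a ∈ S.grade i) (hb : b ∈ S.grade j) (hc : c ∈ S.grade k) (s t : ℂ) :
    m.pmul (C s) a (m.pmul (-(X + C t)) b c)
      = m.pmul (-(X + C t)) (m.pmul (C s) a b) c := by
  have hP := hCA.toIsLambdaProduct
  have hab : m.pmul (C s) a b ∈ S.grade (i + j) := pmul_mem hP ha hb _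
  have e1 : m.pmul (-(X + C t)) b c = sgn k j • m.pmul (C t) c b := commP' hCA hc hb t
  have e2 : m.pmul (-(X + C t)) (m.pmul (C s) a b) c
      = sgn k (i + j) • m.pmul (C t) c (m.pmul (C s) a b) := commP' hCA hc hab t
  have e3 : m.pmul (C t) c (m.pmul (C s) a b)
      = m.pmul (C (t + s)) (m.pmul (C t) c a) b := assocP hCA _ _ _ _ _
  have e4 : m.pmul (C t) c a = sgn k i • m.pmul (-(X + C t)) a c := commP hCA hc ha t
  have e5 : m.pmul (C (t+s)) (m.pmul (-(X + C t)) a c) b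
      = m.pmul (C (t+s)) (m.pmul (C s) a c) b := by
    apply repoint_left hP
    rw [aeval_negXC, aeval_CC]
    have h1 : -(-(C (t+s) : Polynomial ℂ) + C t) = C (t+s) - C t := by ring
    rw [h1, ← Polynomial.C_sub]
    congr 1
    ring
  have e6 : m.pmul (C s) a (m.pmul (C t) c b)
      = m.pmul (C (s + t)) (m.pmul (C s) a c) b := assocP hCA s t a c b
  have e7 : (C (s + t) : Polynomial ℂ) = C (t + s) := by rw [add_comm]
  have eL : m.pmul (C s) a (m.pmul (-(X + C t)) b c)
      = sgn k j • m.pmul (C (t+s)) (m.pmul (C s) a c) b := by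
    rw [e1, m.pmul_smul_right, e6, e7]
  have eR : m.pmul (-(X + C t)) (m.pmul (C s) a b) c
      = (sgn k (i+j) * sgn k i) • m.pmul (C (t+s)) (m.pmul (C s) a c) b := by
    rw [e2, e3, e4, m.pmul_smul_left, e5, smul_smul]
  rw [eL, eR]
  congr 1
  rw [sgn_add_right]
  linear_combination (-(sgn k j)) * sgn_sq k i

end Infra4

section Infra5
set_option linter.unusedSectionVars false
set_option maxHeartbeats 2000000

variable {L : Type*} [AddCommGroup L] [Module ℂ L]
  [Module (Polynomial ℂ) L] [IsScalarTower ℂ (Polynomial ℂ) L]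
  {S : SuperModule L} {m br : ConformalProduct L}

open ConformalProduct

lemma IsPM.qpow (jj : ℕ) (z : L) : IsPM (fun q : Polynomial ℂ => (q ^ jj) • z) := by
  refine ⟨jj + 1, fun n => if n = jj then z else 0, fun q => ?_⟩
  show (q ^ jj) • z = _
  rw [Finset.sum_eq_single_of_mem jj (Finset.mem_range.mpr (by omega))
    (fun b _ hb => by
      show q ^ b • (if b = jj then z else 0) = 0
      rw [if_neg hb, smul_zero])]
  show _ = q ^ jj • (if jj = jj then z else 0)
  rw [if_pos rfl]

lemma IsPM.termPow (kk jj : ℕ) (c0 : Polynomial ℂ) (z : L) :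
    IsPM (fun q : Polynomial ℂ => ((q + c0) ^ kk * q ^ jj) • z) := by
  induction kk with
  | zero => exact (IsPM.qpow jj z).congr (fun q => by rw [pow_zero, one_mul])
  | succ kk ih =>
      refine ((ih.mulQ).add (ih.smulPolyConst c0)).congr (fun q => ?_)
      show q • _ + c0 • _ = _
      rw [smul_smul, smul_smul, ← add_smul]
      congr 1
      rw [pow_succ]
      ring

lemma IsPM.ofRep (N : ℕ) (u : ℕ → L) :
    IsPM (fun q : Polynomial ℂ => ∑ n ∈ Finset.range N, q ^ n • u n) := ⟨N, u, fun _ => rfl⟩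

/-- Expansion of a `pmul` whose left slot is a `pmul`. -/
lemma pmul_pmul_left (hbr : IsLambdaProduct S br) {a b : L} {J : ℕ}
    (hJ : ∀ n, J ≤ n → m.coeff n a b = 0) (P Q : Polynomial ℂ) (c : L) :
    br.pmul P (m.pmul Q a b) c
      = ∑ jj ∈ Finset.range J, (Polynomial.aeval (-P) Q) ^ jj
          • br.pmul P (m.coeff jj a b) c := by
  rw [m.pmul_eq_sum hJ, br.pmul_sum_left]
  apply Finset.sum_congr rfl
  intro jj _
  rw [pmul_pull_left hbr, map_pow]

/-- Expansion of a `pmul` whose right slot is a `pmul`. -/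
lemma pmul_pmul_right (hbr : IsLambdaProduct S br) {a c : L} {N : ℕ}
    (hN : ∀ n, N ≤ n → m.coeff n a c = 0) (P Q : Polynomial ℂ) (b : L) :
    br.pmul P b (m.pmul Q a c)
      = ∑ n ∈ Finset.range N, (Polynomial.aeval (X + P) Q) ^ n
          • br.pmul P b (m.coeff n a c) := by
  rw [m.pmul_eq_sum hN, br.pmul_sum_right]
  apply Finset.sum_congr rfl
  intro n _
  rw [pmul_pull_right hbr, map_pow]

/-- The conjugated transposed Leibniz rule. -/
lemma TLC (hT : IsTPCSA S m br) {i j : ZMod 2} {a b : L}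
    (ha : a ∈ S.grade i) (hb : b ∈ S.grade j) (c : L) (t s : ℂ) :
    (2:ℂ) • m.pmul (-(X + C t)) a (br.pmul (C s) b c)
      = br.pmul (-(X + C (t - s))) (m.pmul (-(X + C s)) a b) c
        + sgn i j • br.pmul (C s) b (m.pmul (-(X + C (t - s))) a c) := by
  have hPbr := hT.lie.toIsLambdaProduct
  obtain ⟨J, hJ⟩ := m.exists_bound a b
  obtain ⟨N, hN⟩ := m.exists_bound a c
  choose Kf hKf using (fun jj => br.exists_bound (m.coeff jj a b) c)
  set K := (Finset.range J).sup Kf with hKdef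
  have hK : ∀ jj, jj < J → ∀ kk, K ≤ kk → br.coeff kk (m.coeff jj a b) c = 0 := by
    intro jj hjj kk hkk
    exact hKf jj kk (le_trans (Finset.le_sup (Finset.mem_range.mpr hjj)) hkk)
  have expandLL : ∀ P Q : Polynomial ℂ, br.pmul P (m.pmul Q a b) c
      = ∑ jj ∈ Finset.range J, ∑ kk ∈ Finset.range K,
          (P ^ kk * (Polynomial.aeval (-P) Q) ^ jj) • br.coeff kk (m.coeff jj a b) c := by
    intro P Q
    rw [pmul_pmul_left hPbr hJ]
    apply Finset.sum_congr rfl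
    intro jj hjj
    rw [br.pmul_eq_sum (hK jj (Finset.mem_range.mp hjj)), Finset.smul_sum]
    apply Finset.sum_congr rfl
    intro kk _
    rw [smul_smul, mul_comm]
  have expandR : ∀ Q : Polynomial ℂ, br.pmul (C s) b (m.pmul Q a c)
      = ∑ n ∈ Finset.range N,
          ((Polynomial.aeval (X + C s) Q) ^ n) • br.pmul (C s) b (m.coeff n a c) :=
    fun Q => pmul_pmul_right hPbr hN (C s) Q b
  have hIsPMΨ : IsPM (fun q : Polynomial ℂ =>
      (∑ jj ∈ Finset.range J, ∑ kk ∈ Finset.range K,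
        ((q + C s) ^ kk * q ^ jj) • br.coeff kk (m.coeff jj a b) c)
      + sgn i j • ∑ n ∈ Finset.range N, q ^ n • br.pmul (C s) b (m.coeff n a c)) := by
    apply IsPM.add
    · exact IsPM.finsetSum _ _ (fun jj _ => IsPM.finsetSum _ _
        (fun kk _ => IsPM.termPow kk jj (C s) _))
    · exact (IsPM.ofRep N _).smulC _
  have hIsPMΦ : IsPM (fun q => (2:ℂ) • m.pmul q a (br.pmul (C s) b c)) :=
    (m.isPM_pmul a _).smulC 2
  have hbase : ∀ lam : ℂ,
      (2:ℂ) • m.pmul (C lam) a (br.pmul (C s) b c)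
        = (∑ jj ∈ Finset.range J, ∑ kk ∈ Finset.range K,
            (((C lam) + C s) ^ kk * (C lam) ^ jj) • br.coeff kk (m.coeff jj a b) c)
          + sgn i j • ∑ n ∈ Finset.range N,
              (C lam) ^ n • br.pmul (C s) b (m.coeff n a c) := by
    intro lam
    rw [tlP hT ha hb c lam s]
    have b1 : br.pmul (C (lam + s)) (m.pmul (C lam) a b) c
        = ∑ jj ∈ Finset.range J, ∑ kk ∈ Finset.range K,
            (((C lam) + C s) ^ kk * (C lam) ^ jj) • br.coeff kk (m.coeff jj a b) c := by
      rw [expandLL (C (lam + s)) (C lam)]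
      apply Finset.sum_congr rfl
      intro jj _
      apply Finset.sum_congr rfl
      intro kk _
      congr 1
      rw [aeval_CC, ← Polynomial.C_add]
    have b2 : br.pmul (C s) b (m.pmul (C lam) a c)
        = ∑ n ∈ Finset.range N, (C lam) ^ n • br.pmul (C s) b (m.coeff n a c) := by
      rw [expandR (C lam)]
      apply Finset.sum_congr rfl
      intro n _
      congr 1
      rw [aeval_CC]
    rw [b1, b2]
  have main := liftEq hIsPMΦ hIsPMΨ hbase (-(X + C t))
  have main' : (2:ℂ) • m.pmul (-(X + C t)) a (br.pmul (C s) b c)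
      = (∑ jj ∈ Finset.range J, ∑ kk ∈ Finset.range K,
          (((-(X + C t)) + C s) ^ kk * (-(X + C t)) ^ jj) • br.coeff kk (m.coeff jj a b) c)
        + sgn i j • ∑ n ∈ Finset.range N,
            (-(X + C t)) ^ n • br.pmul (C s) b (m.coeff n a c) := main
  have eq1 : br.pmul (-(X + C (t - s))) (m.pmul (-(X + C s)) a b) c
      = ∑ jj ∈ Finset.range J, ∑ kk ∈ Finset.range K,
          (((-(X + C t)) + C s) ^ kk * (-(X + C t)) ^ jj) • br.coeff kk (m.coeff jj a b) c := by
    rw [expandLL (-(X + C (t - s))) (-(X + C s))]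
    have c1 : Polynomial.aeval (-(-(X + C (t - s)))) (-(X + C s)) = -(X + C t) := by
      rw [neg_neg, aeval_negXC,
        show ((X + C (t - s)) + C s : Polynomial ℂ) = X + (C (t-s) + C s) by ring,
        ← Polynomial.C_add, show t - s + s = t by ring]
    have c2 : (-(X + C (t - s)) : Polynomial ℂ) = (-(X + C t)) + C s := by
      rw [show ((-(X + C t)) + C s : Polynomial ℂ) = -(X + (C t - C s)) by ring,
        ← Polynomial.C_sub]
    rw [c1, c2]
  have eq2 : br.pmul (C s) b (m.pmul (-(X + C (t - s))) a c)
      = ∑ n ∈ Finset.range N, (-(X + C t)) ^ n • br.pmul (C s) b (m.coeff n a c) := by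
    rw [expandR (-(X + C (t - s)))]
    have c3 : Polynomial.aeval (X + C s) (-(X + C (t - s))) = -(X + C t) := by
      rw [aeval_negXC,
        show ((X + C s) + C (t - s) : Polynomial ℂ) = X + (C s + C (t-s)) by ring,
        ← Polynomial.C_add, show s + (t - s) = t by ring]
    rw [c3]
  rw [eq1, eq2]
  exact main'

end Infra5

lemma sgn_pow_two (i j : ZMod 2) : sgn i j ^ 2 = 1 := by
  rw [pow_two]; exact sgn_sq i j

open ConformalProduct in
set_option maxHeartbeats 4000000 in
/-- the identity (3.20) in a transposed Poisson conformal superalgebra. -/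
theorem statement_6 (S : SuperModule L) (m br : ConformalProduct L)
    (hT : IsTPCSA S m br) (iu iv ix iy : ZMod 2) (u v x y : L)
    (hu : u ∈ S.grade iu) (hv : v ∈ S.grade iv) (hx : x ∈ S.grade ix) (hy : y ∈ S.grade iy)
    (lam mu gam : ℂ) :
    sgn iv ix • m.mul (mu - lam) x (br.mul lam u (m.mul gam v y))
      + sgn iu iv • m.mul (gam + mu) (br.mul (gam + mu - lam) (m.mul gam v x) u) y
      - sgn iu ix • m.mul (lam + gam) (m.mul lam u v) (br.mul (mu - lam) x y) = 0 := by
  have hCA := hT.commAssoc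
  have hL := hT.lie
  have hPm := hCA.toIsLambdaProduct
  have hPbr := hL.toIsLambdaProduct
  rw [show gam + mu - lam = gam + (mu - lam) by ring,
    show gam + mu = lam + gam + (mu - lam) by ring]
  set nu : ℂ := mu - lam with hnudef
  simp only [ConformalProduct.mul_eq_pmul]
  -- grading facts
  have hUV : m.pmul (C lam) u v ∈ S.grade (iu + iv) := pmul_mem hPm hu hv _
  have hVX : m.pmul (C gam) v x ∈ S.grade (iv + ix) := pmul_mem hPm hv hx _
  have hXU : m.pmul (C nu) x u ∈ S.grade (ix + iu) := pmul_mem hPm hx hu _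
  have hXV : m.pmul (C nu) x v ∈ S.grade (ix + iv) := pmul_mem hPm hx hv _
  have hUY : m.pmul (C lam) u y ∈ S.grade (iu + iy) := pmul_mem hPm hu hy _
  have hVY : m.pmul (C gam) v y ∈ S.grade (iv + iy) := pmul_mem hPm hv hy _
  have hYU : m.pmul (-(X + C lam)) y u ∈ S.grade (iy + iu) := pmul_mem hPm hy hu _
  have hYV : m.pmul (-(X + C gam)) y v ∈ S.grade (iy + iv) := pmul_mem hPm hy hv _
  have hBxy : br.pmul (C nu) x y ∈ S.grade (ix + iy) := pmul_mem hPbr hx hy _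
  have hW2 : br.pmul (C (gam + nu)) (m.pmul (C gam) v x) u ∈ S.grade ((iv + ix) + iu) :=
    pmul_mem hPbr hVX hu _
  have hBxuy : br.pmul (C (lam + nu)) (m.pmul (C nu) x u) y ∈ S.grade ((ix + iu) + iy) :=
    pmul_mem hPbr hXU hy _
  have hZ120 : m.pmul (-(X + C nu)) (m.pmul (-(X + C gam)) y v) x ∈ S.grade ((iy + iv) + ix) :=
    pmul_mem hPm hYV hx _
  have hB2 : br.pmul (C nu) x (m.pmul (C lam) u y) ∈ S.grade (ix + (iu + iy)) :=
    pmul_mem hPbr hx hUY _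
  -- relation 1
  have r1 : (2:ℂ) • m.pmul (C nu) x (br.pmul (C lam) u (m.pmul (C gam) v y))
      = br.pmul (C (lam + nu)) (m.pmul (C nu) x u) (m.pmul (C gam) v y)
        + sgn iu ix • br.pmul (C lam) u (m.pmul (C (gam + nu)) (m.pmul (C nu) x v) y) := by
    have h := tlP hT hx hu (m.pmul (C gam) v y) nu lam
    rw [assocP hCA nu gam x v y] at h
    rw [show nu + lam = lam + nu by ring, show nu + gam = gam + nu by ring,
      sgn_comm ix iu] at h
    exact h
  -- relation 4
  have r4 : m.pmul (C (lam + gam + nu)) (br.pmul (C (gam + nu)) (m.pmul (C gam) v x) u) y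
      = (sgn iu iy * sgn iv iy * sgn ix iy) •
          m.pmul (-(X + C (lam + gam + nu))) y
            (br.pmul (C (gam + nu)) (m.pmul (C gam) v x) u) := by
    rw [commP hCA hW2 hy (lam + gam + nu)]
    have hc : sgn ((iv + ix) + iu) iy = sgn iu iy * sgn iv iy * sgn ix iy := by
      rw [sgn_add_left, sgn_add_left]; ring
    rw [hc]
  -- relation 7
  have r7 : m.pmul (C (lam + gam)) (m.pmul (C lam) u v) (br.pmul (C nu) x y)
      = (sgn iu ix * sgn iu iy * sgn iv ix * sgn iv iy) •
          m.pmul (-(X + C gam)) (m.pmul (-(X + C lam)) (br.pmul (C nu) x y) u) v := by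
    have h1 := commP hCA hUV hBxy (lam + gam)
    have h2 := GA1 hCA hBxy hu hv (lam + gam) lam
    rw [show lam + gam - lam = gam by ring] at h2
    rw [h1, h2]
    have hc : sgn (iu + iv) (ix + iy) = sgn iu ix * sgn iu iy * sgn iv ix * sgn iv iy := by
      rw [sgn_add_left, sgn_add_right, sgn_add_right]; ring
    rw [hc]
  -- relation 8
  have r8 : (2:ℂ) • m.pmul (C (lam + gam)) (m.pmul (C lam) u v) (br.pmul (C nu) x y)
      = br.pmul (C (lam + gam + nu)) (m.pmul (C (lam + gam)) (m.pmul (C lam) u v) x) y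
        + (sgn iu ix * sgn iv ix) •
            br.pmul (C nu) x (m.pmul (C (lam + gam)) (m.pmul (C lam) u v) y) := by
    have h := tlP hT hUV hx y (lam + gam) nu
    rw [sgn_add_left] at h
    exact h
  -- relation 19
  have r19 : br.pmul (C lam) u (m.pmul (C (gam + nu)) (m.pmul (C nu) x v) y)
      = sgn iv ix • br.pmul (C lam) u (m.pmul (C (gam + nu)) (m.pmul (C gam) v x) y) := by
    have h1 := commP hCA hx hv nu
    have h2 : m.pmul (C (gam + nu)) (m.pmul (-(X + C nu)) v x) y
        = m.pmul (C (gam + nu)) (m.pmul (C gam) v x) y := by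
      apply repoint_left hPm
      rw [aeval_negXC, aeval_CC,
        show (-(-(C (gam + nu)) + C nu) : Polynomial ℂ) = C (gam + nu) - C nu by ring,
        ← Polynomial.C_sub, show gam + nu - nu = gam by ring]
    rw [h1, m.pmul_smul_left, h2, br.pmul_smul_right, sgn_comm ix iv]
  -- relation 33
  have r33 : (2:ℂ) • m.pmul (-(X + C (lam + gam + nu))) y
        (br.pmul (C (gam + nu)) (m.pmul (C gam) v x) u)
      = br.pmul (-(X + C lam))
          (m.pmul (-(X + C nu)) (m.pmul (-(X + C gam)) y v) x) u
        + (sgn iv iy * sgn ix iy) •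
            br.pmul (C (gam + nu)) (m.pmul (C gam) v x) (m.pmul (-(X + C lam)) y u) := by
    have h := TLC hT hy hVX u (lam + gam + nu) (gam + nu)
    rw [show lam + gam + nu - (gam + nu) = lam by ring] at h
    have h2 := GA1 hCA hy hv hx (gam + nu) gam
    rw [show gam + nu - gam = nu by ring] at h2
    rw [h2] at h
    have hc : sgn iy (iv + ix) = sgn iv iy * sgn ix iy := by
      rw [sgn_add_right, sgn_comm iy iv, sgn_comm iy ix]
    rw [hc] at h
    exact h
  -- relation 47
  have r47 : m.pmul (-(X + C gam)) (m.pmul (-(X + C lam)) (br.pmul (C nu) x y) u) v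
      = (sgn iu ix * sgn iu iy) •
          m.pmul (-(X + C gam)) (m.pmul (C lam) u (br.pmul (C nu) x y)) v := by
    rw [commP' hCA hu hBxy lam, m.pmul_smul_left, sgn_add_right]
  -- relation 50
  have r50 : br.pmul (C (lam + gam + nu)) (m.pmul (C (lam + gam)) (m.pmul (C lam) u v) x) y
      = (sgn iu ix * sgn iv ix) •
          br.pmul (C (lam + gam + nu)) (m.pmul (C (lam + nu)) (m.pmul (C nu) x u) v) y := by
    have h1 := commP hCA hUV hx (lam + gam)
    have h2 := GA1 hCA hx hu hv (lam + gam) lam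
    rw [show lam + gam - lam = gam by ring] at h2
    have h3 : br.pmul (C (lam + gam + nu))
        (m.pmul (-(X + C gam)) (m.pmul (-(X + C lam)) x u) v) y
        = br.pmul (C (lam + gam + nu))
            (m.pmul (C (lam + nu)) (m.pmul (-(X + C lam)) x u) v) y := by
      apply repoint_left hPbr
      rw [aeval_negXC, aeval_CC,
        show (-(-(C (lam + gam + nu)) + C gam) : Polynomial ℂ)
          = C (lam + gam + nu) - C gam by ring,
        ← Polynomial.C_sub, show lam + gam + nu - gam = lam + nu by ring]
    have h4 : m.pmul (C (lam + nu)) (m.pmul (-(X + C lam)) x u) v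
        = m.pmul (C (lam + nu)) (m.pmul (C nu) x u) v := by
      apply repoint_left hPm
      rw [aeval_negXC, aeval_CC,
        show (-(-(C (lam + nu)) + C lam) : Polynomial ℂ) = C (lam + nu) - C lam by ring,
        ← Polynomial.C_sub, show lam + nu - lam = nu by ring]
    rw [h1, h2, br.pmul_smul_left, h3, h4]
    congr 1
    rw [sgn_add_left, sgn_comm iv ix]
  -- relation 53
  have r53 : br.pmul (C nu) x (m.pmul (C (lam + gam)) (m.pmul (C lam) u v) y)
      = (sgn iu iy * sgn iv iy) •
          br.pmul (C nu) x (m.pmul (-(X + C gam)) (m.pmul (-(X + C lam)) y u) v) := by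
    have h1 := commP hCA hUV hy (lam + gam)
    have h2 := GA1 hCA hy hu hv (lam + gam) lam
    rw [show lam + gam - lam = gam by ring] at h2
    rw [h1, h2, br.pmul_smul_right, sgn_add_left]
  -- relation 76
  have r76 : m.pmul (C gam) v (br.pmul (C (lam + nu)) (m.pmul (C nu) x u) y)
      = (sgn iu iv * sgn iv ix * sgn iv iy) •
          m.pmul (-(X + C gam)) (br.pmul (C (lam + nu)) (m.pmul (C nu) x u) y) v := by
    rw [commP hCA hv hBxuy gam]
    have hc : sgn iv ((ix + iu) + iy) = sgn iu iv * sgn iv ix * sgn iv iy := by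
      rw [sgn_add_right, sgn_add_right, sgn_comm iv iu, sgn_comm iv ix,
        sgn_comm iv iy, sgn_comm iu iv, sgn_comm ix iv, sgn_comm iy iv]
      ring
    rw [hc]
  -- relation 77
  have r77 : (2:ℂ) • m.pmul (C gam) v (br.pmul (C (lam + nu)) (m.pmul (C nu) x u) y)
      = br.pmul (C (lam + gam + nu))
          (m.pmul (C (gam + nu)) (m.pmul (C gam) v x) u) y
        + (sgn iu iv * sgn iv ix) •
            br.pmul (C (lam + nu)) (m.pmul (C nu) x u) (m.pmul (C gam) v y) := by
    have h := tlP hT hv hXU y gam (lam + nu)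
    rw [assocP hCA gam nu v x u] at h
    rw [show gam + (lam + nu) = lam + gam + nu by ring] at h
    have hc : sgn iv (ix + iu) = sgn iu iv * sgn iv ix := by
      rw [sgn_add_right, sgn_comm iv iu]; ring
    rw [hc] at h
    exact h
  -- relation 93
  have r93 : br.pmul (C lam) u (m.pmul (C (gam + nu)) (m.pmul (C gam) v x) y)
      = (sgn iv iy * sgn ix iy) •
          br.pmul (C lam) u (m.pmul (-(X + C nu)) (m.pmul (-(X + C gam)) y v) x) := by
    have h1 := commP hCA hVX hy (gam + nu)
    have h2 := GA1 hCA hy hv hx (gam + nu) gam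
    rw [show gam + nu - gam = nu by ring] at h2
    rw [h1, h2, br.pmul_smul_right, sgn_add_left]
  -- relation 120
  have r120 : br.pmul (-(X + C lam))
        (m.pmul (-(X + C nu)) (m.pmul (-(X + C gam)) y v) x) u
      = -((sgn iu iv * sgn iu ix * sgn iu iy) •
          br.pmul (C lam) u (m.pmul (-(X + C nu)) (m.pmul (-(X + C gam)) y v) x)) := by
    rw [skewP' hL hu hZ120 lam]
    have hc : sgn iu ((iy + iv) + ix) = sgn iu iv * sgn iu ix * sgn iu iy := by
      rw [sgn_add_right, sgn_add_right]; ring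
    rw [hc]
  -- relation 161
  have r161 : (2:ℂ) • m.pmul (-(X + C gam))
        (m.pmul (C lam) u (br.pmul (C nu) x y)) v
      = m.pmul (-(X + C gam)) (br.pmul (C (lam + nu)) (m.pmul (C lam) u x) y) v
        + sgn iu ix •
            m.pmul (-(X + C gam)) (br.pmul (C nu) x (m.pmul (C lam) u y)) v := by
    have h := tlP hT hu hx y lam nu
    calc (2:ℂ) • m.pmul (-(X + C gam)) (m.pmul (C lam) u (br.pmul (C nu) x y)) v
        = m.pmul (-(X + C gam)) ((2:ℂ) • m.pmul (C lam) u (br.pmul (C nu) x y)) v := by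
          rw [m.pmul_smul_left]
      _ = m.pmul (-(X + C gam)) (br.pmul (C (lam + nu)) (m.pmul (C lam) u x) y
            + sgn iu ix • br.pmul (C nu) x (m.pmul (C lam) u y)) v := by rw [h]
      _ = _ := by rw [m.pmul_add_left, m.pmul_smul_left]
  -- relation 170
  have r170 : br.pmul (C (lam + gam + nu))
        (m.pmul (C (lam + nu)) (m.pmul (C nu) x u) v) y
      = (sgn iu iv * sgn iv ix) •
          br.pmul (C (lam + gam + nu))
            (m.pmul (C (gam + nu)) (m.pmul (C gam) v x) u) y := by
    have h1 := commP hCA hXU hv (lam + nu)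
    have h2 := GA1 hCA hv hx hu (lam + nu) nu
    rw [show lam + nu - nu = lam by ring] at h2
    have h3 : br.pmul (C (lam + gam + nu))
        (m.pmul (-(X + C lam)) (m.pmul (-(X + C nu)) v x) u) y
        = br.pmul (C (lam + gam + nu))
            (m.pmul (C (gam + nu)) (m.pmul (-(X + C nu)) v x) u) y := by
      apply repoint_left hPbr
      rw [aeval_negXC, aeval_CC,
        show (-(-(C (lam + gam + nu)) + C lam) : Polynomial ℂ)
          = C (lam + gam + nu) - C lam by ring,
        ← Polynomial.C_sub, show lam + gam + nu - lam = gam + nu by ring]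
    have h4 : m.pmul (C (gam + nu)) (m.pmul (-(X + C nu)) v x) u
        = m.pmul (C (gam + nu)) (m.pmul (C gam) v x) u := by
      apply repoint_left hPm
      rw [aeval_negXC, aeval_CC,
        show (-(-(C (gam + nu)) + C nu) : Polynomial ℂ) = C (gam + nu) - C nu by ring,
        ← Polynomial.C_sub, show gam + nu - nu = gam by ring]
    rw [h1, h2, br.pmul_smul_left, h3, h4]
    congr 1
    rw [sgn_add_left, sgn_comm ix iv, sgn_comm iu iv]
    ring
  -- relation 179
  have r179 : br.pmul (C nu) x
        (m.pmul (-(X + C gam)) (m.pmul (-(X + C lam)) y u) v)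
      = (sgn iu iv * sgn iv iy) •
          br.pmul (C nu) x (m.pmul (-(X + C lam)) (m.pmul (C gam) v y) u) := by
    have h1 := commP' hCA hv hYU gam
    have h2 := GA2 hCA hv hy hu gam lam
    rw [h1, h2, br.pmul_smul_right]
    have hc : sgn iv (iy + iu) = sgn iu iv * sgn iv iy := by
      rw [sgn_add_right, sgn_comm iv iu, sgn_comm iv iy, sgn_comm iy iv]
      ring
    rw [hc]
  -- relation 220
  have r220 : m.pmul (-(X + C gam))
        (br.pmul (C (lam + nu)) (m.pmul (C nu) x u) y) v
      = sgn iu ix •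
          m.pmul (-(X + C gam)) (br.pmul (C (lam + nu)) (m.pmul (C lam) u x) y) v := by
    have h1 := commP hCA hx hu nu
    have h2 : br.pmul (C (lam + nu)) (m.pmul (-(X + C nu)) u x) y
        = br.pmul (C (lam + nu)) (m.pmul (C lam) u x) y := by
      apply repoint_left hPbr
      rw [aeval_negXC, aeval_CC,
        show (-(-(C (lam + nu)) + C nu) : Polynomial ℂ) = C (lam + nu) - C nu by ring,
        ← Polynomial.C_sub, show lam + nu - nu = lam by ring]
    rw [h1, br.pmul_smul_left, h2, m.pmul_smul_left, sgn_comm ix iu]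
  -- relation 292
  have r292 : (2:ℂ) • m.pmul (C gam) v
        (br.pmul (C nu) x (m.pmul (-(X + C lam)) y u))
      = br.pmul (C (gam + nu)) (m.pmul (C gam) v x) (m.pmul (-(X + C lam)) y u)
        + sgn iv ix •
            br.pmul (C nu) x (m.pmul (-(X + C lam)) (m.pmul (C gam) v y) u) := by
    have h := tlP hT hv hx (m.pmul (-(X + C lam)) y u) gam nu
    have h2 := GA2 hCA hv hy hu gam lam
    rw [h2] at h
    exact h
  -- relation 294
  have r294 : m.pmul (C gam) v (br.pmul (C nu) x (m.pmul (-(X + C lam)) y u))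
      = sgn iu iy • m.pmul (C gam) v (br.pmul (C nu) x (m.pmul (C lam) u y)) := by
    have h1 := commP' hCA hu hy lam
    rw [h1, br.pmul_smul_right, m.pmul_smul_right]
  -- relation 363
  have r363 : m.pmul (-(X + C gam)) (br.pmul (C nu) x (m.pmul (C lam) u y)) v
      = (sgn iu iv * sgn iv ix * sgn iv iy) •
          m.pmul (C gam) v (br.pmul (C nu) x (m.pmul (C lam) u y)) := by
    rw [commP' hCA hv hB2 gam]
    have hc : sgn iv (ix + (iu + iy)) = sgn iu iv * sgn iv ix * sgn iv iy := by
      rw [sgn_add_right, sgn_add_right, sgn_comm iv iu, sgn_comm iv ix, sgn_comm iv iy,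
        sgn_comm iu iv, sgn_comm ix iv, sgn_comm iy iv]
      ring
    rw [hc]
  -- final assembly
  linear_combination (norm := (match_scalars <;> (ring_nf; try simp only [sgn_pow_two, one_mul, mul_one, neg_neg, one_pow]; all_goals ring1)))
      (((1:ℂ)/2) * sgn iv ix) • r1
    + (sgn iu iv) • r4
    + ((-2 : ℂ) * sgn iu ix) • r7
    + (((1:ℂ)/2) * sgn iu ix) • r8
    + (((1:ℂ)/2) * sgn iu ix * sgn iv ix) • r19
    + (((1:ℂ)/2) * sgn iu iv * sgn iu iy * sgn iv iy * sgn ix iy) • r33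
    + ((-2:ℂ) * sgn iu iy * sgn iv ix * sgn iv iy) • r47
    + (((1:ℂ)/2) * sgn iu ix) • r50
    + (((1:ℂ)/2) * sgn iv ix) • r53
    + (sgn iu iv) • r76
    + (((-1:ℂ)/2) * sgn iu iv) • r77
    + (((1:ℂ)/2) * sgn iu ix) • r93
    + (((1:ℂ)/2) * sgn iu iv * sgn iu iy * sgn iv iy * sgn ix iy) • r120
    + ((-1:ℂ) * sgn iu ix * sgn iv ix * sgn iv iy) • r161
    + (((1:ℂ)/2) * sgn iv ix) • r170
    + (((1:ℂ)/2) * sgn iu iy * sgn iv ix * sgn iv iy) • r179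
    + (sgn iv ix * sgn iv iy) • r220
    + (((-1:ℂ)/2) * sgn iu iv * sgn iu iy) • r292
    + (sgn iu iv * sgn iu iy) • r294
    + ((-1:ℂ) * sgn iv ix * sgn iv iy) • r363

end TPCSAFormal
end
end

section
/- Let (L, ∘_λ, [·_λ ·]) be a transposed Poisson conformal superalgebra and let h ∈ L₀ be an even element. Define the even linear map α_h : L → L by α_h(x) = h ∘_(0) x := (h ∘_λ x)|_{λ=0}. Then (L, [·_λ ·], α_h) is a Hom-Lie conformal superalgebra; in particular α_h commutes with ∂ and the Hom-Jacobi identity [α_h(a)_λ [b_μ c]] = [[a_λ b]_{λ+μ} α_h(c)] + (−1)^{|a||b|}[α_h(b)_μ [a_λ c]] holds for all homogeneous a, b, c ∈ L. -/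
open Polynomial
open scoped TensorProduct

noncomputable section

namespace TPCSAFormal

variable (L : Type*) [AddCommGroup L] [Module ℂ L]
  [Module (Polynomial ℂ) L] [IsScalarTower ℂ (Polynomial ℂ) L]

variable {L}

section Helpers

lemma ConformalProduct.mul_eq_sum (m : ConformalProduct L) {a b : L} {N : ℕ}
    (hN : ∀ n : ℕ, N ≤ n → m.coeff n a b = 0) (lam : ℂ) :
    m.mul lam a b = ∑ n ∈ Finset.range N, lam ^ n • m.coeff n a b := by
  apply finsum_eq_sum_of_support_subset
  intro n hn
  simp only [Function.mem_support] at hn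
  simp only [Finset.coe_range, Set.mem_Iio]
  by_contra hc
  push_neg at hc
  exact hn (by rw [hN n hc, smul_zero])

lemma ConformalProduct.mul_zero_eval (m : ConformalProduct L) (a b : L) :
    m.mul 0 a b = m.coeff 0 a b := by
  unfold ConformalProduct.mul
  rw [finsum_eq_single _ 0]
  · simp
  · intro n hn
    rw [zero_pow hn, zero_smul]

lemma ConformalProduct.mul_add_right (m : ConformalProduct L) (lam : ℂ) (a x y : L) :
    m.mul lam a (x + y) = m.mul lam a x + m.mul lam a y := by
  obtain ⟨N₁, h₁⟩ := m.coeff_finite a x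
  obtain ⟨N₂, h₂⟩ := m.coeff_finite a y
  rw [m.mul_eq_sum (N := max N₁ N₂)
      (fun n hn => h₁ n (le_trans (le_max_left _ _) hn)) lam,
    m.mul_eq_sum (N := max N₁ N₂)
      (fun n hn => h₂ n (le_trans (le_max_right _ _) hn)) lam,
    m.mul_eq_sum (N := max N₁ N₂)
      (fun n hn => by
        rw [map_add, h₁ n (le_trans (le_max_left _ _) hn),
          h₂ n (le_trans (le_max_right _ _) hn), add_zero]) lam,
    ← Finset.sum_add_distrib]
  exact Finset.sum_congr rfl fun n _ => by rw [map_add, smul_add]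

lemma ConformalProduct.mul_smul_right (m : ConformalProduct L) (lam c : ℂ) (a x : L) :
    m.mul lam a (c • x) = c • m.mul lam a x := by
  obtain ⟨N, hN⟩ := m.coeff_finite a x
  rw [m.mul_eq_sum (N := N) (fun n hn => hN n hn) lam,
    m.mul_eq_sum (N := N) (fun n hn => by rw [map_smul, hN n hn, smul_zero]) lam,
    Finset.smul_sum]
  exact Finset.sum_congr rfl fun n _ => by rw [map_smul, smul_comm]

lemma ConformalProduct.mul_add_left (m : ConformalProduct L) (lam : ℂ) (x y b : L) :
    m.mul lam (x + y) b = m.mul lam x b + m.mul lam y b := by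
  obtain ⟨N₁, h₁⟩ := m.coeff_finite x b
  obtain ⟨N₂, h₂⟩ := m.coeff_finite y b
  rw [m.mul_eq_sum (N := max N₁ N₂)
      (fun n hn => h₁ n (le_trans (le_max_left _ _) hn)) lam,
    m.mul_eq_sum (N := max N₁ N₂)
      (fun n hn => h₂ n (le_trans (le_max_right _ _) hn)) lam,
    m.mul_eq_sum (N := max N₁ N₂)
      (fun n hn => by
        rw [map_add, LinearMap.add_apply, h₁ n (le_trans (le_max_left _ _) hn),
          h₂ n (le_trans (le_max_right _ _) hn), add_zero]) lam,
    ← Finset.sum_add_distrib]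
  exact Finset.sum_congr rfl fun n _ => by
    rw [map_add, LinearMap.add_apply, smul_add]

lemma ConformalProduct.mul_smul_left (m : ConformalProduct L) (lam c : ℂ) (x b : L) :
    m.mul lam (c • x) b = c • m.mul lam x b := by
  obtain ⟨N, hN⟩ := m.coeff_finite x b
  rw [m.mul_eq_sum (N := N) (fun n hn => by
      rw [map_smul, LinearMap.smul_apply, hN n hn, smul_zero]) lam,
    m.mul_eq_sum (N := N) (fun n hn => hN n hn) lam, Finset.smul_sum]
  exact Finset.sum_congr rfl fun n _ => by
    rw [map_smul, LinearMap.smul_apply, smul_comm]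

lemma mul_mem_grade {S : SuperModule L} {m : ConformalProduct L}
    (hm : IsLambdaProduct S m) {i j : ZMod 2} {a b : L}
    (ha : a ∈ S.grade i) (hb : b ∈ S.grade j) (lam : ℂ) :
    m.mul lam a b ∈ S.grade (i + j) := by
  obtain ⟨N, hN⟩ := m.coeff_finite a b
  rw [m.mul_eq_sum (N := N) hN lam]
  exact Submodule.sum_mem _ fun n _ =>
    Submodule.smul_mem _ _ (hm.even i j a b ha hb n)

/-- Abstract linear-algebra assembly step for the Hom-Jacobi computation. -/
lemma key_combine {M : Type*} [AddCommGroup M] [Module ℂ M]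
    (P Q t1 t2 u1 u2 X Y Z : M)
    (main : (2 : ℂ) • P + t1 + t2 = u1 + u2 + (2 : ℂ) • Q + ((2 : ℂ) • X + (Y + Z)))
    (h1 : P = u1 + Y) (h2 : t1 = u2 + X) (h3 : t2 = Q + Z) : P = Q + X := by
  have hu1 : u1 = P - Y := by rw [h1]; abel
  have hu2 : u2 = t1 - X := by rw [h2]; abel
  rw [hu1, hu2] at main
  calc P = ((2 : ℂ) • P + t1 + t2) - (P + t1 + t2) := by rw [two_smul]; abel
    _ = ((P - Y) + (t1 - X) + (2 : ℂ) • Q + ((2 : ℂ) • X + (Y + Z))) - (P + t1 + t2) := by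
        rw [main]
    _ = Q + X := by rw [h3, two_smul ℂ Q, two_smul ℂ X]; abel

end Helpers

/-- for an even element `h` of a transposed Poisson conformal superalgebra,
`(L, [·_λ·], α_h)` with `α_h x = h ∘_(0) x = (h ∘_λ x)|_{λ=0}` is a Hom-Lie conformal
superalgebra. -/
theorem statement_8 (S : SuperModule L) (m br : ConformalProduct L)
    (hT : IsTPCSA S m br) (h : L) (hh : h ∈ S.grade 0) :
    IsHomLie S br (fun x => m.mul 0 h x) := by
  -- the map `α` is a half-derivation of the bracket
  have halfder : ∀ (k : ZMod 2) (x : L), x ∈ S.grade k → ∀ (y : L) (ν : ℂ),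
      (2 : ℂ) • m.mul 0 h (br.mul ν x y) =
        br.mul ν (m.mul 0 h x) y + br.mul ν x (m.mul 0 h y) := by
    intro k x hx y ν
    have := hT.transposedLeibniz 0 k h x hh hx y 0 ν
    simpa [sgn] using this
  refine
    { toIsLambdaProduct := hT.lie.toIsLambdaProduct
      map_smul_add := ?_
      map_grade := ?_
      commute_partial := ?_
      skew := hT.lie.skew
      homJacobi := ?_ }
  · intro c a b
    rw [m.mul_add_right, m.mul_smul_right]
  · intro i a ha
    simpa using mul_mem_grade hT.commAssoc.toIsLambdaProduct hh ha 0
  · intro a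
    have := hT.commAssoc.sesq_right 0 h a
    simpa using this
  · intro i j a b ha hb c lam mu
    have hαa : m.mul 0 h a ∈ S.grade i := by
      simpa using mul_mem_grade hT.commAssoc.toIsLambdaProduct hh ha 0
    have hαb : m.mul 0 h b ∈ S.grade j := by
      simpa using mul_mem_grade hT.commAssoc.toIsLambdaProduct hh hb 0
    have hab : br.mul lam a b ∈ S.grade (i + j) :=
      mul_mem_grade hT.lie.toIsLambdaProduct ha hb lam
    -- base Jacobi identity
    have jac0 := hT.lie.jacobi i j a b ha hb c lam mu
    -- half-derivation identities
    have E1 := halfder i a ha (br.mul mu b c) lam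
    have E2 := halfder j b hb c mu
    have hU := halfder (i + j) (br.mul lam a b) hab c (lam + mu)
    have hab2 := halfder i a ha b lam
    have hV := halfder j b hb (br.mul lam a c) mu
    have hac := halfder i a ha c lam
    -- `eqA : 4 • α(D) = 2 • P + t1 + t2`
    have eqA : (4 : ℂ) • m.mul 0 h (br.mul lam a (br.mul mu b c)) =
        (2 : ℂ) • br.mul lam (m.mul 0 h a) (br.mul mu b c) +
          br.mul lam a (br.mul mu (m.mul 0 h b) c) +
          br.mul lam a (br.mul mu b (m.mul 0 h c)) := by
      calc (4 : ℂ) • m.mul 0 h (br.mul lam a (br.mul mu b c))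
          = (2 : ℂ) • ((2 : ℂ) • m.mul 0 h (br.mul lam a (br.mul mu b c))) := by
            rw [smul_smul]; norm_num
        _ = (2 : ℂ) • br.mul lam (m.mul 0 h a) (br.mul mu b c) +
              br.mul lam a ((2 : ℂ) • m.mul 0 h (br.mul mu b c)) := by
            rw [E1, smul_add, br.mul_smul_right]
        _ = (2 : ℂ) • br.mul lam (m.mul 0 h a) (br.mul mu b c) +
              (br.mul lam a (br.mul mu (m.mul 0 h b) c) +
                br.mul lam a (br.mul mu b (m.mul 0 h c))) := by
            rw [E2, br.mul_add_right]
        _ = _ := by rw [← add_assoc]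
    -- `4 • α(U) = u1 + u2 + 2 • Q`
    have hU4 : (4 : ℂ) • m.mul 0 h (br.mul (lam + mu) (br.mul lam a b) c) =
        br.mul (lam + mu) (br.mul lam (m.mul 0 h a) b) c +
          br.mul (lam + mu) (br.mul lam a (m.mul 0 h b)) c +
          (2 : ℂ) • br.mul (lam + mu) (br.mul lam a b) (m.mul 0 h c) := by
      calc (4 : ℂ) • m.mul 0 h (br.mul (lam + mu) (br.mul lam a b) c)
          = (2 : ℂ) • ((2 : ℂ) • m.mul 0 h (br.mul (lam + mu) (br.mul lam a b) c)) := by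
            rw [smul_smul]; norm_num
        _ = br.mul (lam + mu) ((2 : ℂ) • m.mul 0 h (br.mul lam a b)) c +
              (2 : ℂ) • br.mul (lam + mu) (br.mul lam a b) (m.mul 0 h c) := by
            rw [hU, smul_add, br.mul_smul_left]
        _ = br.mul (lam + mu) (br.mul lam (m.mul 0 h a) b +
              br.mul lam a (m.mul 0 h b)) c +
              (2 : ℂ) • br.mul (lam + mu) (br.mul lam a b) (m.mul 0 h c) := by
            rw [hab2]
        _ = _ := by rw [br.mul_add_left]
    -- `4 • α(V) = 2 • R + (t3 + t4)`
    have hV4 : (4 : ℂ) • m.mul 0 h (br.mul mu b (br.mul lam a c)) =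
        (2 : ℂ) • br.mul mu (m.mul 0 h b) (br.mul lam a c) +
          (br.mul mu b (br.mul lam (m.mul 0 h a) c) +
            br.mul mu b (br.mul lam a (m.mul 0 h c))) := by
      calc (4 : ℂ) • m.mul 0 h (br.mul mu b (br.mul lam a c))
          = (2 : ℂ) • ((2 : ℂ) • m.mul 0 h (br.mul mu b (br.mul lam a c))) := by
            rw [smul_smul]; norm_num
        _ = (2 : ℂ) • br.mul mu (m.mul 0 h b) (br.mul lam a c) +
              br.mul mu b ((2 : ℂ) • m.mul 0 h (br.mul lam a c)) := by
            rw [hV, smul_add, br.mul_smul_right]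
        _ = _ := by rw [hac, br.mul_add_right]
    -- apply `α` to the base Jacobi identity
    have hAD : m.mul 0 h (br.mul lam a (br.mul mu b c)) =
        m.mul 0 h (br.mul (lam + mu) (br.mul lam a b) c) +
          sgn i j • m.mul 0 h (br.mul mu b (br.mul lam a c)) := by
      rw [jac0, m.mul_add_right, m.mul_smul_right]
    -- `eqB`
    have eqB : (4 : ℂ) • m.mul 0 h (br.mul lam a (br.mul mu b c)) =
        br.mul (lam + mu) (br.mul lam (m.mul 0 h a) b) c +
          br.mul (lam + mu) (br.mul lam a (m.mul 0 h b)) c +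
          (2 : ℂ) • br.mul (lam + mu) (br.mul lam a b) (m.mul 0 h c) +
          ((2 : ℂ) • (sgn i j • br.mul mu (m.mul 0 h b) (br.mul lam a c)) +
            (sgn i j • br.mul mu b (br.mul lam (m.mul 0 h a) c) +
              sgn i j • br.mul mu b (br.mul lam a (m.mul 0 h c)))) := by
      calc (4 : ℂ) • m.mul 0 h (br.mul lam a (br.mul mu b c))
          = (4 : ℂ) • m.mul 0 h (br.mul (lam + mu) (br.mul lam a b) c) +
              sgn i j • ((4 : ℂ) • m.mul 0 h (br.mul mu b (br.mul lam a c))) := by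
            rw [hAD, smul_add, smul_comm (4 : ℂ) (sgn i j)]
        _ = br.mul (lam + mu) (br.mul lam (m.mul 0 h a) b) c +
              br.mul (lam + mu) (br.mul lam a (m.mul 0 h b)) c +
              (2 : ℂ) • br.mul (lam + mu) (br.mul lam a b) (m.mul 0 h c) +
              sgn i j • ((2 : ℂ) • br.mul mu (m.mul 0 h b) (br.mul lam a c) +
                (br.mul mu b (br.mul lam (m.mul 0 h a) c) +
                  br.mul mu b (br.mul lam a (m.mul 0 h c)))) := by
            rw [hU4, hV4]
        _ = _ := by
            rw [smul_add, smul_add, smul_comm (sgn i j) (2 : ℂ)]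
    -- the three auxiliary Jacobi identities
    have jac1 := hT.lie.jacobi i j (m.mul 0 h a) b hαa hb c lam mu
    have jac2 := hT.lie.jacobi i j a (m.mul 0 h b) ha hαb c lam mu
    have jac3 := hT.lie.jacobi i j a b ha hb (m.mul 0 h c) lam mu
    exact key_combine _ _ _ _ _ _ _ _ _ (eqA.symm.trans eqB) jac1 jac2 jac3

end TPCSAFormal
end
end

section
/- Let (L, ∘_λ, [·_λ ·]) be a transposed Poisson conformal superalgebra and let h ∈ L₀ be an even element. Define a new λ-bracket on L by [x_λ y]^h := h ∘_(0) [x_λ y], where h ∘_(0) z := (h ∘_μ z)|_{μ=0}. Then (L, ∘_λ, [·_λ ·]^h) is a transposed Poisson conformal superalgebra. -/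
open Polynomial
open scoped TensorProduct

noncomputable section

namespace TPCSAFormal

variable (L : Type*) [AddCommGroup L] [Module ℂ L]
  [Module (Polynomial ℂ) L] [IsScalarTower ℂ (Polynomial ℂ) L]

variable {L}

/-! ### Auxiliary lemmas for the mutation construction -/

section MutationAux

set_option linter.unusedSectionVars false

namespace ConformalProduct

lemma mul_eq_sum_s10 (c : ConformalProduct L) (lam : ℂ) (a b : L) {N : ℕ}
    (hN : ∀ n, N ≤ n → c.coeff n a b = 0) :
    c.mul lam a b = ∑ n ∈ Finset.range N, lam ^ n • c.coeff n a b := by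
  refine finsum_eq_sum_of_support_subset _ ?_
  intro n hn
  simp only [Function.mem_support] at hn
  simp only [Finset.coe_range, Set.mem_Iio]
  by_contra hlt
  push_neg at hlt
  exact hn (by rw [hN n hlt, smul_zero])

lemma cmul_eq_sum (c : ConformalProduct L) (lam : ℂ) (a b : L) {N : ℕ}
    (hN : ∀ n, N ≤ n → c.coeff n a b = 0) :
    c.cmul lam a b =
      ∑ n ∈ Finset.range N, ((-((X : Polynomial ℂ) + C lam)) ^ n) • c.coeff n a b := by
  refine finsum_eq_sum_of_support_subset _ ?_
  intro n hn
  simp only [Function.mem_support] at hn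
  simp only [Finset.coe_range, Set.mem_Iio]
  by_contra hlt
  push_neg at hlt
  exact hn (by rw [hN n hlt, smul_zero])

lemma mul_addR (c : ConformalProduct L) (σ : ℂ) (u a b : L) :
    c.mul σ u (a + b) = c.mul σ u a + c.mul σ u b := by
  obtain ⟨Na, hNa⟩ := c.coeff_finite u a
  obtain ⟨Nb, hNb⟩ := c.coeff_finite u b
  have hab : ∀ n, max Na Nb ≤ n → c.coeff n u (a + b) = 0 := fun n hn => by
    rw [map_add, hNa n (le_trans (le_max_left _ _) hn), hNb n (le_trans (le_max_right _ _) hn),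
      add_zero]
  rw [c.mul_eq_sum_s10 σ u (a + b) hab,
    c.mul_eq_sum_s10 σ u a (fun n hn => hNa n (le_trans (le_max_left _ _) hn)),
    c.mul_eq_sum_s10 σ u b (fun n hn => hNb n (le_trans (le_max_right _ _) hn)),
    ← Finset.sum_add_distrib]
  exact Finset.sum_congr rfl fun n _ => by rw [map_add, smul_add]

lemma mul_smulR (c : ConformalProduct L) (σ : ℂ) (u : L) (r : ℂ) (a : L) :
    c.mul σ u (r • a) = r • c.mul σ u a := by
  obtain ⟨N, hN⟩ := c.coeff_finite u a
  have h2 : ∀ n, N ≤ n → c.coeff n u (r • a) = 0 := fun n hn => by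
    rw [map_smul, hN n hn, smul_zero]
  rw [c.mul_eq_sum_s10 σ u (r • a) h2, c.mul_eq_sum_s10 σ u a hN, Finset.smul_sum]
  exact Finset.sum_congr rfl fun n _ => by rw [map_smul, smul_comm]

lemma mul_addL (c : ConformalProduct L) (σ : ℂ) (a b u : L) :
    c.mul σ (a + b) u = c.mul σ a u + c.mul σ b u := by
  obtain ⟨Na, hNa⟩ := c.coeff_finite a u
  obtain ⟨Nb, hNb⟩ := c.coeff_finite b u
  have hab : ∀ n, max Na Nb ≤ n → c.coeff n (a + b) u = 0 := fun n hn => by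
    rw [map_add, LinearMap.add_apply, hNa n (le_trans (le_max_left _ _) hn),
      hNb n (le_trans (le_max_right _ _) hn), add_zero]
  rw [c.mul_eq_sum_s10 σ (a + b) u hab,
    c.mul_eq_sum_s10 σ a u (fun n hn => hNa n (le_trans (le_max_left _ _) hn)),
    c.mul_eq_sum_s10 σ b u (fun n hn => hNb n (le_trans (le_max_right _ _) hn)),
    ← Finset.sum_add_distrib]
  exact Finset.sum_congr rfl fun n _ => by rw [map_add, LinearMap.add_apply, smul_add]

lemma mul_smulL (c : ConformalProduct L) (σ : ℂ) (r : ℂ) (a u : L) :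
    c.mul σ (r • a) u = r • c.mul σ a u := by
  obtain ⟨N, hN⟩ := c.coeff_finite a u
  have h2 : ∀ n, N ≤ n → c.coeff n (r • a) u = 0 := fun n hn => by
    rw [map_smul, LinearMap.smul_apply, hN n hn, smul_zero]
  rw [c.mul_eq_sum_s10 σ (r • a) u h2, c.mul_eq_sum_s10 σ a u hN, Finset.smul_sum]
  exact Finset.sum_congr rfl fun n _ => by rw [map_smul, LinearMap.smul_apply, smul_comm]

lemma mul_zeroL (c : ConformalProduct L) (σ : ℂ) (u : L) : c.mul σ 0 u = 0 := by
  have : ∀ n : ℕ, σ ^ n • c.coeff n (0 : L) u = 0 := fun n => by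
    rw [map_zero, LinearMap.zero_apply, smul_zero]
  unfold ConformalProduct.mul
  simp only [this, finsum_zero]

lemma mul_sumL (c : ConformalProduct L) (σ : ℂ) {ι : Type*} (s : Finset ι) (f : ι → L) (u : L) :
    c.mul σ (∑ i ∈ s, f i) u = ∑ i ∈ s, c.mul σ (f i) u := by
  classical
  induction s using Finset.induction with
  | empty => simpa using c.mul_zeroL σ u
  | @insert a s hmem ih =>
      rw [Finset.sum_insert hmem, Finset.sum_insert hmem, c.mul_addL, ih]

lemma mul_XpowL (c : ConformalProduct L)
    (hsl : ∀ (lam : ℂ) (a b : L), c.mul lam ((X : Polynomial ℂ) • a) b = (-lam) • c.mul lam a b)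
    (σ : ℂ) (k : ℕ) (a b : L) :
    c.mul σ (((X : Polynomial ℂ) ^ k) • a) b = (-σ) ^ k • c.mul σ a b := by
  induction k with
  | zero => simp
  | succ k ih =>
      rw [pow_succ', mul_smul, hsl, ih, smul_smul, ← pow_succ']

lemma mul_polyL (c : ConformalProduct L)
    (hsl : ∀ (lam : ℂ) (a b : L), c.mul lam ((X : Polynomial ℂ) • a) b = (-lam) • c.mul lam a b)
    (σ : ℂ) (p : Polynomial ℂ) (a b : L) :
    c.mul σ (p • a) b = p.eval (-σ) • c.mul σ a b := by
  induction p using Polynomial.induction_on' with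
  | add p q hp hq => rw [add_smul, c.mul_addL, hp, hq, eval_add, add_smul]
  | monomial n r =>
      have hC : ∀ v : L, (C r : Polynomial ℂ) • v = r • v := fun v => by
        rw [← Polynomial.algebraMap_eq]; exact algebraMap_smul _ r v
      rw [← C_mul_X_pow_eq_monomial, mul_smul, hC, c.mul_smulL, c.mul_XpowL hsl,
        eval_mul, eval_C, eval_pow, eval_X, smul_smul]

lemma cmulL_eval (c₁ c₂ : ConformalProduct L)
    (hsl : ∀ (lam : ℂ) (a b : L), c₁.mul lam ((X : Polynomial ℂ) • a) b = (-lam) • c₁.mul lam a b)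
    (ρ α : ℂ) (b a u : L) :
    c₁.mul ρ (c₂.cmul α b a) u = c₁.mul ρ (c₂.mul (ρ - α) b a) u := by
  obtain ⟨N, hN⟩ := c₂.coeff_finite b a
  rw [c₂.cmul_eq_sum α b a hN, c₂.mul_eq_sum_s10 (ρ - α) b a hN, c₁.mul_sumL, c₁.mul_sumL]
  refine Finset.sum_congr rfl fun n _ => ?_
  rw [c₁.mul_polyL hsl, c₁.mul_smulL]
  congr 1
  rw [eval_pow, eval_neg, eval_add, eval_X, eval_C]
  ring

lemma mul_grade {S : SuperModule L} {c : ConformalProduct L}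
    (hev : ∀ (i j : ZMod 2) (a b : L), a ∈ S.grade i → b ∈ S.grade j →
      ∀ n, c.coeff n a b ∈ S.grade (i + j))
    {i j : ZMod 2} {a b : L} (ha : a ∈ S.grade i) (hb : b ∈ S.grade j) (σ : ℂ) :
    c.mul σ a b ∈ S.grade (i + j) := by
  obtain ⟨N, hN⟩ := c.coeff_finite a b
  rw [c.mul_eq_sum_s10 σ a b hN]
  exact Submodule.sum_mem _ fun n _ => Submodule.smul_mem _ _ (hev i j a b ha hb n)

lemma mul_zero_eq (c : ConformalProduct L) (u w : L) : c.mul 0 u w = c.coeff 0 u w := by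
  have h0 : c.mul 0 u w = ∑ᶠ n : ℕ, (0 : ℂ) ^ n • c.coeff n u w := rfl
  rw [h0, finsum_eq_single _ 0 (fun n hn => by rw [zero_pow hn, zero_smul])]
  simp

end ConformalProduct

lemma sgn_zeroL (j : ZMod 2) : sgn 0 j = 1 := by simp [sgn]

lemma sgn_zeroR (i : ZMod 2) : sgn i 0 = 1 := by simp [sgn]

end MutationAux

/-- modifying the Lie conformal bracket of a transposed Poisson conformal
superalgebra by the `0`-th product with an even element `h`, i.e.
`[x_λ y]^h = h ∘_(0) [x_λ y]`, again yields a transposed Poisson conformal superalgebra. -/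
theorem statement_10 (S : SuperModule L) (m br : ConformalProduct L)
    (hT : IsTPCSA S m br) (h : L) (hh : h ∈ S.grade 0) :
    ∃ brh : ConformalProduct L,
      (∀ (lam : ℂ) (x y : L), brh.mul lam x y = m.mul 0 h (br.mul lam x y)) ∧
      IsTPCSA S m brh := by
  classical
  -- the mutated bracket `[x_λ y]^h = h ∘_(0) [x_λ y]`
  let brh : ConformalProduct L :=
    { coeff := fun n => (br.coeff n).compr₂ (m.coeff 0 h)
      coeff_finite := fun a b => by
        obtain ⟨N, hN⟩ := br.coeff_finite a b
        exact ⟨N, fun n hn => by simp [LinearMap.compr₂_apply, hN n hn]⟩ }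
  have hcoeff : ∀ (n : ℕ) (a b : L), brh.coeff n a b = m.coeff 0 h (br.coeff n a b) :=
    fun n a b => rfl
  -- the λ-product of the mutated bracket
  have hmul : ∀ (lam : ℂ) (x y : L), brh.mul lam x y = m.mul 0 h (br.mul lam x y) := by
    intro lam x y
    obtain ⟨N, hN⟩ := br.coeff_finite x y
    have hN' : ∀ n, N ≤ n → brh.coeff n x y = 0 := fun n hn => by
      simp [hcoeff, hN n hn]
    rw [brh.mul_eq_sum_s10 lam x y hN', br.mul_eq_sum_s10 lam x y hN, m.mul_zero_eq, map_sum]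
    exact Finset.sum_congr rfl fun n _ => by rw [map_smul, hcoeff]
  -- `h ∘_(0) ·` commutes with the action of `∂`
  have hTX : ∀ w : L, m.mul 0 h ((X : Polynomial ℂ) • w) = (X : Polynomial ℂ) • m.mul 0 h w := by
    intro w
    have h1 := hT.commAssoc.sesq_right 0 h w
    simpa using h1
  have hTXpow : ∀ (k : ℕ) (w : L),
      m.mul 0 h (((X : Polynomial ℂ) ^ k) • w) = ((X : Polynomial ℂ) ^ k) • m.mul 0 h w := by
    intro k
    induction k with
    | zero => intro w; simp
    | succ k ih =>
        intro w
        rw [pow_succ', mul_smul, hTX, ih, ← mul_smul, ← pow_succ']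
  have hTpoly : ∀ (p : Polynomial ℂ) (w : L), m.mul 0 h (p • w) = p • m.mul 0 h w := by
    intro p
    induction p using Polynomial.induction_on' with
    | add p q hp hq =>
        intro w
        rw [add_smul, m.mul_addR, hp, hq, add_smul]
    | monomial n r =>
        intro w
        have hC : ∀ v : L, (C r : Polynomial ℂ) • v = r • v := fun v => by
          rw [← Polynomial.algebraMap_eq]; exact algebraMap_smul _ r v
        rw [← C_mul_X_pow_eq_monomial, mul_smul, hC, m.mul_smulR, hTXpow, mul_smul, hC]
  -- the conformal `-∂-λ`-product of the mutated bracket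
  have hcmul : ∀ (lam : ℂ) (x y : L), brh.cmul lam x y = m.mul 0 h (br.cmul lam x y) := by
    intro lam x y
    obtain ⟨N, hN⟩ := br.coeff_finite x y
    have hN' : ∀ n, N ≤ n → brh.coeff n x y = 0 := fun n hn => by
      simp [hcoeff, hN n hn]
    have hsum : ∀ (s : Finset ℕ) (f : ℕ → L),
        m.mul 0 h (∑ i ∈ s, f i) = ∑ i ∈ s, m.mul 0 h (f i) := by
      intro s f
      rw [m.mul_zero_eq, map_sum]
      exact Finset.sum_congr rfl fun n _ => (m.mul_zero_eq h (f n)).symm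
    rw [brh.cmul_eq_sum lam x y hN', br.cmul_eq_sum lam x y hN, hsum]
    exact Finset.sum_congr rfl fun n _ => by rw [hTpoly, hcoeff, m.mul_zero_eq]
  -- grading
  have heven : ∀ (i j : ZMod 2) (a b : L), a ∈ S.grade i → b ∈ S.grade j →
      ∀ n, brh.coeff n a b ∈ S.grade (i + j) := by
    intro i j a b ha hb n
    have h1 := hT.commAssoc.even 0 (i + j) h (br.coeff n a b) hh
      (hT.lie.even i j a b ha hb n) 0
    rw [hcoeff]
    simpa using h1
  -- conformal sesquilinearity
  have hsesqL : ∀ (lam : ℂ) (a b : L),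
      brh.mul lam ((X : Polynomial ℂ) • a) b = (-lam) • brh.mul lam a b := by
    intro lam a b
    rw [hmul, hmul, hT.lie.sesq_left, m.mul_smulR]
  have hsesqR : ∀ (lam : ℂ) (a b : L),
      brh.mul lam a ((X : Polynomial ℂ) • b) =
        (X : Polynomial ℂ) • brh.mul lam a b + lam • brh.mul lam a b := by
    intro lam a b
    rw [hmul, hmul, hT.lie.sesq_right, m.mul_addR, m.mul_smulR, hTX]
  -- skew-symmetry
  have hskew : ∀ (i j : ZMod 2) (a b : L), a ∈ S.grade i → b ∈ S.grade j →
      ∀ lam : ℂ, brh.mul lam a b = -(sgn i j • brh.cmul lam b a) := by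
    intro i j a b ha hb lam
    rw [hmul, hT.lie.skew i j a b ha hb lam, hcmul, ← neg_smul, m.mul_smulR, neg_smul]
  -- the collapse property: `a ∘_λ (h ∘_(0) w) = h ∘_(0) (a ∘_λ w)`
  have hcollapse : ∀ (i : ZMod 2) (a : L), a ∈ S.grade i → ∀ (w : L) (lam : ℂ),
      m.mul lam a (m.mul 0 h w) = m.mul 0 h (m.mul lam a w) := by
    intro i a ha w lam
    have h1 : m.mul lam a (m.mul 0 h w) = m.mul (lam + 0) (m.mul lam a h) w :=
      hT.commAssoc.assoc lam 0 a h w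
    have h2 : m.mul lam a h = m.cmul lam h a := by
      have := hT.commAssoc.comm i 0 a h ha hh lam
      simpa [sgn_zeroR] using this
    have h3 : m.mul lam (m.cmul lam h a) w = m.mul lam (m.mul (lam - lam) h a) w :=
      ConformalProduct.cmulL_eval m m hT.commAssoc.sesq_left lam lam h a w
    have h4 : m.mul 0 h (m.mul lam a w) = m.mul (0 + lam) (m.mul 0 h a) w :=
      hT.commAssoc.assoc 0 lam h a w
    rw [h1, add_zero, h2, h3, sub_self, h4, zero_add]
  -- transposed conformal super-Leibniz rule for the mutated bracket
  have hTLb : ∀ (i j : ZMod 2) (a b : L), a ∈ S.grade i → b ∈ S.grade j →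
      ∀ (c : L) (lam mu : ℂ),
        (2 : ℂ) • m.mul lam a (brh.mul mu b c) =
          brh.mul (lam + mu) (m.mul lam a b) c + sgn i j • brh.mul mu b (m.mul lam a c) := by
    intro i j a b ha hb c lam mu
    rw [hmul, hmul, hmul, hcollapse i a ha]
    have h1 := congrArg (fun w => m.mul 0 h w) (hT.transposedLeibniz i j a b ha hb c lam mu)
    simpa only [ConformalProduct.mul_addR, ConformalProduct.mul_smulR] using h1
  -- Jacobi identity for the mutated bracket
  have hjac : ∀ (i j : ZMod 2) (x y : L), x ∈ S.grade i → y ∈ S.grade j →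
      ∀ (z : L) (lam mu : ℂ),
        brh.mul lam x (brh.mul mu y z) =
          brh.mul (lam + mu) (brh.mul lam x y) z + sgn i j • brh.mul mu y (brh.mul lam x z) := by
    intro i j x y hx hy z lam mu
    have hTgr : ∀ (k : ZMod 2) (w : L), w ∈ S.grade k → m.mul 0 h w ∈ S.grade k := by
      intro k w hw
      have := ConformalProduct.mul_grade hT.commAssoc.even hh hw (0 : ℂ)
      simpa using this
    have hTx : m.mul 0 h x ∈ S.grade i := hTgr i x hx
    have hTy : m.mul 0 h y ∈ S.grade j := hTgr j y hy
    have hU : br.mul lam x y ∈ S.grade (i + j) :=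
      ConformalProduct.mul_grade hT.lie.even hx hy lam
    -- the ten instances of the axioms constituting the certificate
    have r1 := hT.transposedLeibniz 0 i h x hh hx (br.mul mu y z) 0 lam
    have r2 := hT.transposedLeibniz 0 j h y hh hy z 0 mu
    have r3 := hT.transposedLeibniz 0 j h y hh hy (br.mul lam x z) 0 mu
    have r4 := hT.transposedLeibniz 0 i h x hh hx z 0 lam
    have r5 := hT.transposedLeibniz 0 (i + j) h (br.mul lam x y) hh hU z 0 (lam + mu)
    have r6 := hT.transposedLeibniz 0 i h x hh hx y 0 lam
    have r7 := hT.lie.jacobi i j (m.mul 0 h x) y hTx hy z lam mu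
    have r8 := hT.lie.jacobi i j x (m.mul 0 h y) hx hTy z lam mu
    have r9 := hT.lie.jacobi i j x y hx hy z lam mu
    have r10 := hT.lie.jacobi i j x y hx hy (m.mul 0 h z) lam mu
    simp only [zero_add, sgn_zeroL, one_smul] at r1 r2 r3 r4 r5 r6
    have e1 := congrArg (fun w => m.mul 0 h w) r1
    have e2 := congrArg (fun w => m.mul 0 h (br.mul lam x w)) r2
    have e3 := congrArg (fun w => m.mul 0 h w) r3
    have e4 := congrArg (fun w => m.mul 0 h (br.mul mu y w)) r4
    have e5 := congrArg (fun w => m.mul 0 h w) r5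
    have e6 := congrArg (fun w => m.mul 0 h (br.mul (lam + mu) w z)) r6
    have e7 := congrArg (fun w => m.mul 0 h w) r7
    have e8 := congrArg (fun w => m.mul 0 h w) r8
    have e9 := congrArg (fun w => m.mul 0 h (m.mul 0 h w)) r9
    have e10 := congrArg (fun w => m.mul 0 h w) r10
    simp only [ConformalProduct.mul_addR, ConformalProduct.mul_smulR,
      ConformalProduct.mul_addL, ConformalProduct.mul_smulL] at e1 e2 e3 e4 e5 e6 e7 e8 e9 e10
    simp only [hmul]
    linear_combination (norm := module) e1 + e2 - sgn i j • e3 - sgn i j • e4 - e5 - e6 +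
      e7 + e8 - (2 : ℂ) • e9 + e10
  exact ⟨brh, hmul, ⟨hT.commAssoc, ⟨⟨heven, hsesqL, hsesqR⟩, hskew, hjac⟩, hTLb⟩⟩
end TPCSAFormal
end
end
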